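/- arXiv:1908.03666 — 5 statements merged into one kernel-verified Lean document; each statement's English description precedes it below -/
import Mathlib

section
/- For every λ > 0, α > 0 and t > 0, the function t ↦ E_{α,1}(-λ t^α) is differentiable at t and its derivative equals -λ t^{α-1} E_{α,α}(-λ t^α). -/
open Real

/-- The two-parameter Mittag-Leffler function (real arguments),
with the convention `1/Γ = 0` at the poles of `Γ` (as in Mathlib's `Real.Gamma`). -/
noncomputable def mittagLeffler (α β x : ℝ) : ℝ :=
  ∑' k : ℕ, x ^ k / Real.Gamma ((k : ℝ) * α + β)


lemma gamma_lb {α x : ℝ} (hα : 0 < α) (hx : 1 ≤ x) :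
    x ^ α * Real.Gamma x ≤ 2 * Real.Gamma (x + α) := by
  have hx0 : (0:ℝ) < x := by linarith
  have hxα : (0:ℝ) < x + α := by linarith
  have hΓx : 0 < Real.Gamma x := Real.Gamma_pos_of_pos hx0
  have hΓxα : 0 < Real.Gamma (x + α) := Real.Gamma_pos_of_pos hxα
  have hΓx1 : Real.Gamma (x + 1) = x * Real.Gamma x := Real.Gamma_add_one hx0.ne'
  rcases le_or_gt α 1 with hα1 | hα1
  · -- x+1 = α•(x+α) + (1-α)•(x+1+α)
    have hmem1 : x + α ∈ Set.Ioi (0:ℝ) := hxα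
    have hmem2 : x + 1 + α ∈ Set.Ioi (0:ℝ) := by simp; linarith
    have h := Real.convexOn_log_Gamma.2 hmem1 hmem2 hα.le (by linarith : (0:ℝ) ≤ 1 - α)
      (by ring)
    have hcomb : α • (x + α) + (1 - α) • (x + 1 + α) = x + 1 := by
      simp [smul_eq_mul]; ring
    rw [hcomb] at h
    simp only [Function.comp_apply, smul_eq_mul] at h
    have hΓ2 : Real.Gamma (x + 1 + α) = (x + α) * Real.Gamma (x + α) := by
      rw [show x + 1 + α = (x + α) + 1 by ring, Real.Gamma_add_one hxα.ne']
    rw [hΓx1, hΓ2, Real.log_mul hx0.ne' hΓx.ne', Real.log_mul hxα.ne' hΓxα.ne'] at h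
    -- h : log x + log Γ x ≤ α * log Γ(x+α) + (1-α)*(log (x+α) + log Γ(x+α))
    have key : x * Real.Gamma x ≤ Real.Gamma (x + α) * (x + α) ^ (1 - α) := by
      have h1 : Real.log (x * Real.Gamma x)
          ≤ Real.log (Real.Gamma (x + α) * (x + α) ^ (1 - α)) := by
        rw [Real.log_mul hx0.ne' hΓx.ne',
          Real.log_mul hΓxα.ne' (Real.rpow_pos_of_pos hxα _).ne',
          Real.log_rpow hxα]
        nlinarith [h]
      have := Real.exp_le_exp.mpr h1
      rwa [Real.exp_log (by positivity), Real.exp_log (by positivity)] at this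
    have hb : (x + α) ^ (1 - α) ≤ 2 * x ^ (1 - α) := by
      calc (x + α) ^ (1 - α) ≤ (2 * x) ^ (1 - α) :=
            Real.rpow_le_rpow hxα.le (by linarith) (by linarith)
        _ = 2 ^ (1 - α) * x ^ (1 - α) := Real.mul_rpow (by norm_num) hx0.le
        _ ≤ 2 * x ^ (1 - α) := by
            have : (2:ℝ) ^ (1 - α) ≤ 2 ^ (1:ℝ) :=
              Real.rpow_le_rpow_of_exponent_le (by norm_num) (by linarith)
            simp only [Real.rpow_one] at this
            have := Real.rpow_nonneg hx0.le (1 - α)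
            nlinarith
    have hxsplit : x ^ α * x ^ (1 - α) = x := by
      rw [← Real.rpow_add hx0]; simp
    have hpow : (0:ℝ) < x ^ (1 - α) := Real.rpow_pos_of_pos hx0 _
    have hpowα : (0:ℝ) < x ^ α := Real.rpow_pos_of_pos hx0 _
    -- x^α Γx * (x+α)^{1-α} ≤ x^α Γx * 2 x^{1-α} = 2 x Γx ≤ 2 Γ(x+α) (x+α)^{1-α}
    have hfin : x ^ α * Real.Gamma x * (x + α) ^ (1 - α)
        ≤ 2 * Real.Gamma (x + α) * (x + α) ^ (1 - α) := by
      calc x ^ α * Real.Gamma x * (x + α) ^ (1 - α)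
          ≤ x ^ α * Real.Gamma x * (2 * x ^ (1 - α)) :=
            mul_le_mul_of_nonneg_left hb (by positivity)
        _ = 2 * (x ^ α * x ^ (1 - α) * Real.Gamma x) := by ring
        _ = 2 * (x * Real.Gamma x) := by rw [hxsplit]
        _ ≤ 2 * (Real.Gamma (x + α) * (x + α) ^ (1 - α)) := by nlinarith
        _ = 2 * Real.Gamma (x + α) * (x + α) ^ (1 - α) := by ring
    exact le_of_mul_le_mul_right hfin (Real.rpow_pos_of_pos hxα _)
  · -- x+1 = (1-1/α)•x + (1/α)•(x+α)
    have hmem1 : x ∈ Set.Ioi (0:ℝ) := hx0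
    have hmem2 : x + α ∈ Set.Ioi (0:ℝ) := hxα
    have ha : (0:ℝ) ≤ 1 - 1/α := by
      have : 1/α < 1 := by rw [div_lt_one hα]; exact hα1
      linarith
    have hb : (0:ℝ) ≤ 1/α := by positivity
    have h := Real.convexOn_log_Gamma.2 hmem1 hmem2 ha hb (by ring)
    have hcomb : (1 - 1/α) • x + (1/α) • (x + α) = x + 1 := by
      field_simp [smul_eq_mul]
      simp only [smul_eq_mul]; rw [div_mul_eq_mul_div, div_mul_eq_mul_div, ← add_div, div_eq_iff hα.ne']; ring
    rw [hcomb] at h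
    simp only [Function.comp_apply, smul_eq_mul] at h
    rw [hΓx1, Real.log_mul hx0.ne' hΓx.ne'] at h
    -- h : log x + log Γ x ≤ (1-1/α) log Γ x + (1/α) log Γ (x+α)
    have h2 : α * Real.log x + Real.log (Real.Gamma x) ≤ Real.log (Real.Gamma (x + α)) := by
      have hα' : α ≠ 0 := hα.ne'
      have := mul_le_mul_of_nonneg_left h hα.le
      field_simp at this ⊢
      nlinarith [this]
    have key : x ^ α * Real.Gamma x ≤ Real.Gamma (x + α) := by
      have h1 : Real.log (x ^ α * Real.Gamma x) ≤ Real.log (Real.Gamma (x + α)) := by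
        rw [Real.log_mul (Real.rpow_pos_of_pos hx0 _).ne' hΓx.ne', Real.log_rpow hx0]
        exact h2
      have := Real.exp_le_exp.mpr h1
      rwa [Real.exp_log (by positivity), Real.exp_log hΓxα] at this
    nlinarith

lemma ml_summable_aux {α R : ℝ} (hα : 0 < α) (hR : 1 ≤ R) :
    Summable (fun k : ℕ => ((k:ℝ) + 1) * R ^ k / Real.Gamma ((k:ℝ) * α + 1)) := by
  have hR0 : (0:ℝ) < R := by linarith
  have htend : Filter.Tendsto (fun k : ℕ => ((k:ℝ) * α + 1) ^ α) Filter.atTop Filter.atTop := by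
    exact (tendsto_rpow_atTop hα).comp (Filter.tendsto_atTop_add_const_right _ 1 (Filter.Tendsto.atTop_mul_const hα tendsto_natCast_atTop_atTop))
  apply summable_of_ratio_norm_eventually_le (r := 1/2) (by norm_num)
  filter_upwards [htend.eventually_ge_atTop (16 * R)] with k hk
  have hx1 : (1:ℝ) ≤ (k:ℝ) * α + 1 := by
    have : (0:ℝ) ≤ (k:ℝ) * α := by positivity
    linarith
  set x : ℝ := (k:ℝ) * α + 1 with hxdef
  have hx0 : (0:ℝ) < x := by positivity
  have hΓx : 0 < Real.Gamma x := Real.Gamma_pos_of_pos hx0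
  have hΓxα : 0 < Real.Gamma (x + α) := Real.Gamma_pos_of_pos (by positivity)
  have hgb := gamma_lb hα hx1
  have h8 : 8 * R * Real.Gamma x ≤ Real.Gamma (x + α) := by nlinarith
  have hRk : (0:ℝ) < R ^ k := pow_pos hR0 k
  have heq : ((k:ℝ) + 1) * α + 1 = x + α := by rw [hxdef]; ring
  rw [Real.norm_eq_abs, Real.norm_eq_abs, abs_of_pos (by positivity), abs_of_pos (by positivity),
    Nat.cast_succ, heq,
    show (1/2:ℝ) * (((k:ℝ)+1) * R ^ k / Real.Gamma x) = ((k:ℝ)+1) * R ^ k / (2 * Real.Gamma x)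
      from by ring,
    div_le_div_iff₀ hΓxα (by positivity)]
  have hps : R ^ (k+1) = R ^ k * R := pow_succ R k
  rw [hps]
  nlinarith [mul_le_mul_of_nonneg_left h8 (show (0:ℝ) ≤ ((k:ℝ)+1) * R ^ k by positivity),
    mul_pos (mul_pos hRk hR0) hΓx,
    mul_nonneg (Nat.cast_nonneg (α := ℝ) k) (mul_pos (mul_pos hRk hR0) hΓx).le]
theorem hasDerivAt_mittagLeffler_one (α lam t : ℝ)
    (hα : 0 < α) (hlam : 0 < lam) (ht : 0 < t) :
    HasDerivAt (fun s : ℝ => mittagLeffler α 1 (-lam * s ^ α))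
      (-lam * t ^ (α - 1) * mittagLeffler α α (-lam * t ^ α)) t := by
  set x₀ : ℝ := -lam * t ^ α with hx₀def
  set R : ℝ := |x₀| + 1 with hRdef
  have hR : (1:ℝ) ≤ R := le_add_of_nonneg_left (abs_nonneg x₀)
  have hR0 : (0:ℝ) < R := by linarith
  have hu := ml_summable_aux hα hR
  have hΓpos : ∀ n : ℕ, 0 < Real.Gamma ((n:ℝ) * α + 1) := by
    intro n
    apply Real.Gamma_pos_of_pos
    positivity
  have hx₀mem : x₀ ∈ Metric.ball (0:ℝ) R := by
    simp [Metric.mem_ball, Real.dist_eq, hRdef]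
  have hbound : ∀ (n : ℕ) (y : ℝ), y ∈ Metric.ball (0:ℝ) R →
      ‖((n:ℝ) * y ^ (n-1)) / Real.Gamma ((n:ℝ) * α + 1)‖
        ≤ ((n:ℝ) + 1) * R ^ n / Real.Gamma ((n:ℝ) * α + 1) := by
    intro n y hy
    have hyR : |y| ≤ R := by
      simp only [Metric.mem_ball, Real.dist_eq, sub_zero] at hy
      linarith
    rw [norm_div, Real.norm_eq_abs, Real.norm_eq_abs, abs_of_pos (hΓpos n), abs_mul,
      abs_pow, Nat.abs_cast]
    have hnum : (n:ℝ) * |y| ^ (n-1) ≤ ((n:ℝ) + 1) * R ^ n := by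
      apply mul_le_mul (by linarith) ?_ (by positivity) (by positivity)
      exact (pow_le_pow_left₀ (abs_nonneg y) hyR (n-1)).trans
        (pow_le_pow_right₀ hR (Nat.sub_le n 1))
    exact (div_le_div_iff_of_pos_right (hΓpos n)).mpr hnum
  have hg : ∀ (n : ℕ) (y : ℝ), y ∈ Metric.ball (0:ℝ) R →
      HasDerivAt (fun z : ℝ => z ^ n / Real.Gamma ((n:ℝ) * α + 1))
        (((n:ℝ) * y ^ (n-1)) / Real.Gamma ((n:ℝ) * α + 1)) y :=
    fun n y _ => (hasDerivAt_pow n y).div_const _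
  have hg0 : Summable (fun n : ℕ => x₀ ^ n / Real.Gamma ((n:ℝ) * α + 1)) := by
    apply Summable.of_norm_bounded hu
    intro n
    rw [norm_div, Real.norm_eq_abs, Real.norm_eq_abs, abs_of_pos (hΓpos n), abs_pow]
    apply (div_le_div_iff_of_pos_right (hΓpos n)).mpr
    calc |x₀| ^ n ≤ R ^ n := pow_le_pow_left₀ (abs_nonneg x₀) (by simp [hRdef]) n
      _ ≤ ((n:ℝ) + 1) * R ^ n := by nlinarith [pow_pos hR0 n, Nat.cast_nonneg (α := ℝ) n]
  have hF : HasDerivAt (fun z : ℝ => ∑' n : ℕ, z ^ n / Real.Gamma ((n:ℝ) * α + 1))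
      (∑' n : ℕ, ((n:ℝ) * x₀ ^ (n-1)) / Real.Gamma ((n:ℝ) * α + 1)) x₀ :=
    hasDerivAt_tsum_of_isPreconnected hu Metric.isOpen_ball
      (convex_ball (0:ℝ) R).isPreconnected hg hbound hx₀mem hg0 hx₀mem
  have hinner : HasDerivAt (fun s : ℝ => -lam * s ^ α) (-lam * (α * t ^ (α - 1))) t :=
    (Real.hasDerivAt_rpow_const (Or.inl ht.ne')).const_mul (-lam)
  have H := hF.comp t hinner
  have hDsum : Summable (fun n : ℕ => ((n:ℝ) * x₀ ^ (n-1)) / Real.Gamma ((n:ℝ) * α + 1)) :=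
    Summable.of_norm_bounded hu (fun n => hbound n x₀ hx₀mem)
  have hvals : (∑' n : ℕ, ((n:ℝ) * x₀ ^ (n-1)) / Real.Gamma ((n:ℝ) * α + 1))
      * (-lam * (α * t ^ (α - 1)))
      = -lam * t ^ (α - 1) * mittagLeffler α α x₀ := by
    rw [Summable.tsum_eq_zero_add hDsum]
    simp only [Nat.cast_zero, zero_mul, zero_div, zero_add, Nat.cast_succ, Nat.add_sub_cancel]
    have hαD : α * (∑' n : ℕ, (((n:ℝ) + 1) * x₀ ^ n / Real.Gamma (((n:ℝ) + 1) * α + 1)))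
        = mittagLeffler α α x₀ := by
      rw [← tsum_mul_left, mittagLeffler]
      apply tsum_congr
      intro n
      have hpos : (0:ℝ) < (n:ℝ) * α + α := by positivity
      rw [show ((n:ℝ) + 1) * α + 1 = ((n:ℝ) * α + α) + 1 by ring,
        Real.Gamma_add_one hpos.ne']
      have hΓ : 0 < Real.Gamma ((n:ℝ) * α + α) := Real.Gamma_pos_of_pos hpos
      field_simp
    rw [← hαD]
    ring
  rw [← hvals]
  exact H
end

section
/- For every α > 0, λ ∈ ℝ and z > 0, the function z ↦ z^{α-1} E_{α,α}(-λ z^α) is differentiable at z and its derivative equals z^{α-2} E_{α,α-1}(-λ z^α). -/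
open Real Filter

lemma gamma_div_aux (s : ℝ) : s / Real.Gamma (s + 1) = 1 / Real.Gamma s := by
  rcases eq_or_ne s 0 with h | h
  · simp [h, Real.Gamma_one, Real.Gamma_zero]
  · rw [Real.Gamma_add_one h]
    rcases eq_or_ne (Real.Gamma s) 0 with h2 | h2
    · simp [h2]
    · field_simp


lemma gamma_conv_aux {a x : ℝ} (ha : 0 < a) (ha1 : a ≤ 1) (hx : 1 ≤ x) :
    Real.Gamma x * (x + a - 1) ^ a ≤ Real.Gamma (x + a) := by
  have hp : 0 < x + a - 1 := by linarith
  have hq : 0 < x + a := by linarith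
  have hΓp : 0 < Real.Gamma (x + a - 1) := Real.Gamma_pos_of_pos hp
  have hΓq : 0 < Real.Gamma (x + a) := Real.Gamma_pos_of_pos hq
  have hΓx : 0 < Real.Gamma x := Real.Gamma_pos_of_pos (by linarith)
  have hconv := Real.convexOn_log_Gamma.2 (Set.mem_Ioi.mpr hp) (Set.mem_Ioi.mpr hq)
    ha.le (by linarith : (0:ℝ) ≤ 1 - a) (by ring)
  have hcomb : a • (x + a - 1) + (1 - a) • (x + a) = x := by simp [smul_eq_mul]; ring
  rw [hcomb] at hconv
  simp only [Function.comp_apply, smul_eq_mul] at hconv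
  have hrec : Real.Gamma (x + a) = (x + a - 1) * Real.Gamma (x + a - 1) := by
    have := Real.Gamma_add_one (ne_of_gt hp)
    rw [show x + a - 1 + 1 = x + a by ring] at this
    exact this
  have hlogrec : Real.log (Real.Gamma (x + a - 1)) =
      Real.log (Real.Gamma (x + a)) - Real.log (x + a - 1) := by
    rw [hrec, Real.log_mul (ne_of_gt hp) (ne_of_gt hΓp)]; ring
  rw [hlogrec] at hconv
  have key : Real.log (Real.Gamma x * (x + a - 1) ^ a) ≤ Real.log (Real.Gamma (x + a)) := by
    rw [Real.log_mul (ne_of_gt hΓx) (ne_of_gt (Real.rpow_pos_of_pos hp a)),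
      Real.log_rpow hp]
    nlinarith [hconv]
  exact (Real.log_le_log_iff (mul_pos hΓx (Real.rpow_pos_of_pos hp a)) hΓq).mp key

lemma summable_aux (α β : ℝ) (hα : 0 < α) {r : ℝ} (hr : 0 ≤ r) :
    Summable (fun k : ℕ => r ^ k * ((k : ℝ) + 1) / Real.Gamma ((k : ℝ) * α + β)) := by
  set a := min α 1 with ha_def
  have ha : 0 < a := lt_min hα one_pos
  have ha1 : a ≤ 1 := min_le_right _ _
  have haα : a ≤ α := min_le_left _ _
  have htend : Tendsto (fun k : ℕ => (k : ℝ) * α + β) atTop atTop :=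
    tendsto_atTop_add_const_right _ β (tendsto_natCast_atTop_atTop.atTop_mul_const hα)
  refine summable_of_ratio_norm_eventually_le (r := 1/2) (by norm_num) ?_
  filter_upwards [htend.eventually_ge_atTop (max 2 ((4*r+1) ^ (1/a) + 1))] with k hk
  set x := (k : ℝ) * α + β with hx_def
  have hx2 : (2:ℝ) ≤ x := le_trans (le_max_left _ _) hk
  have hxr : (4*r+1) ^ (1/a) + 1 ≤ x := le_trans (le_max_right _ _) hk
  have hΓx : 0 < Real.Gamma x := Real.Gamma_pos_of_pos (by linarith)
  have hΓxα : 0 < Real.Gamma (x + α) := Real.Gamma_pos_of_pos (by linarith)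
  have h1 : Real.Gamma x * (x + a - 1) ^ a ≤ Real.Gamma (x + a) :=
    gamma_conv_aux ha ha1 (by linarith)
  have h2 : Real.Gamma (x + a) ≤ Real.Gamma (x + α) := by
    rcases eq_or_lt_of_le haα with h | h
    · rw [h]
    · exact le_of_lt (Real.Gamma_strictMonoOn_Ici (by simp only [Set.mem_Ici]; linarith)
        (by simp only [Set.mem_Ici]; linarith) (by linarith))
  have h3 : (4*r+1) ≤ (x + a - 1) ^ a := by
    have h4 : (0:ℝ) ≤ 4*r+1 := by linarith
    have h5 := Real.rpow_le_rpow (Real.rpow_nonneg h4 _)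
      (by linarith : (4*r+1) ^ (1/a) ≤ x + a - 1) ha.le
    rwa [← Real.rpow_mul h4, one_div, inv_mul_cancel₀ (ne_of_gt ha), Real.rpow_one] at h5
  have hG : (4*r+1) * Real.Gamma x ≤ Real.Gamma (x + α) := by nlinarith
  have harg : ((k+1 : ℕ) : ℝ) * α + β = x + α := by push_cast; ring
  rw [harg]
  have pos1 : 0 ≤ r ^ (k+1) * (((k+1:ℕ) : ℝ) + 1) / Real.Gamma (x + α) := by positivity
  have pos2 : 0 ≤ r ^ k * ((k : ℝ) + 1) / Real.Gamma x := by positivity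
  rw [Real.norm_eq_abs, Real.norm_eq_abs, abs_of_nonneg pos1, abs_of_nonneg pos2,
    mul_div_assoc' (1/2), div_le_div_iff₀ hΓxα hΓx]
  push_cast
  have hk2 : ((k:ℝ) + 1 + 1) ≤ 2 * ((k:ℝ) + 1) := by linarith
  have hrk : (0:ℝ) ≤ r ^ k := pow_nonneg hr k
  have hpow : r ^ (k+1) = r ^ k * r := pow_succ r k
  rw [hpow]
  have hint1 : r^k*((k:ℝ)+1) * ((4*r+1)*Real.Gamma x) ≤ r^k*((k:ℝ)+1) * Real.Gamma (x+α) :=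
    mul_le_mul_of_nonneg_left hG (by positivity)
  have hint2 : 0 ≤ r^k * r * Real.Gamma x * (k:ℝ) := by positivity
  have hint3 : 0 ≤ r^k * Real.Gamma x * (k:ℝ) := by positivity
  have hint4 : 0 ≤ r^k * Real.Gamma x := by positivity
  nlinarith [hint1, hint2, hint3, hint4]

theorem hasDerivAt_rpow_mul_mittagLeffler (α lam z : ℝ) (hα : 0 < α) (hz : 0 < z) :
    HasDerivAt (fun x : ℝ => x ^ (α - 1) * mittagLeffler α α (-lam * x ^ α))
      (z ^ (α - 2) * mittagLeffler α (α - 1) (-lam * z ^ α)) z := by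
  have hz2 : (0:ℝ) < z / 2 := by linarith
  have hΓpos : ∀ n : ℕ, 0 < Real.Gamma ((n : ℝ) * α + α) := fun n =>
    Real.Gamma_pos_of_pos (by positivity)
  set C : ℝ := (z/2) ^ (α-2) + (2*z) ^ (α-2) with hC
  have hCpos : 0 < C := by positivity
  set q : ℝ := |lam| * (2*z) ^ α with hq
  have hq0 : 0 ≤ q := by positivity
  -- the individual terms and their derivatives
  have key : HasDerivAt
      (fun y : ℝ => ∑' n : ℕ, ((-lam) ^ n / Real.Gamma ((n : ℝ) * α + α)) * y ^ ((n:ℝ)*α+α-1))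
      (∑' n : ℕ, ((-lam) ^ n / Real.Gamma ((n : ℝ) * α + α)) *
        (((n:ℝ)*α+α-1) * z ^ ((n:ℝ)*α+α-2))) z := by
    refine hasDerivAt_tsum_of_isPreconnected
      (u := fun n : ℕ => (α+1) * C * (q ^ n * ((n:ℝ)+1) / Real.Gamma ((n : ℝ) * α + α)))
      (t := Set.Ioo (z/2) (2*z)) (y₀ := z) (y := z)
      (g' := fun (n : ℕ) (x : ℝ) => ((-lam) ^ n / Real.Gamma ((n : ℝ) * α + α)) *
        (((n:ℝ)*α+α-1) * x ^ ((n:ℝ)*α+α-2)))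
      (((summable_aux α α hα hq0).mul_left _)) isOpen_Ioo
      isPreconnected_Ioo (fun n x hx => ?_) (fun n x hx => ?_)
      (Set.mem_Ioo.mpr ⟨by linarith, by linarith⟩) ?_
      (Set.mem_Ioo.mpr ⟨by linarith, by linarith⟩)
    · -- derivative of each term
      have hx0 : (0:ℝ) < x := lt_trans hz2 hx.1
      have h := (Real.hasDerivAt_rpow_const (x := x) (p := (n:ℝ)*α+α-1)
        (Or.inl (ne_of_gt hx0))).const_mul ((-lam) ^ n / Real.Gamma ((n : ℝ) * α + α))
      simpa [show (n:ℝ)*α+α-1-1 = (n:ℝ)*α+α-2 by ring] using h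
    · -- bound on the derivatives
      have hx0 : (0:ℝ) < x := lt_trans hz2 hx.1
      have hxb : x ≤ 2*z := hx.2.le
      have hxa : z/2 ≤ x := hx.1.le
      have hsplit : x ^ ((n:ℝ)*α+α-2) = x ^ ((n:ℝ)*α) * x ^ (α-2) := by
        rw [← Real.rpow_add hx0]; ring_nf
      have h1 : x ^ ((n:ℝ)*α) ≤ ((2*z) ^ α) ^ n := by
        have hxk : x ^ ((n:ℝ)*α) = (x ^ α) ^ n := by
          rw [mul_comm, Real.rpow_mul hx0.le, Real.rpow_natCast]
        rw [hxk]
        exact pow_le_pow_left₀ (Real.rpow_nonneg hx0.le α)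
          (Real.rpow_le_rpow hx0.le hxb hα.le) n
      have h2 : x ^ (α-2) ≤ C := by
        rcases le_or_gt (α - 2) 0 with h | h
        · have : x ^ (α-2) ≤ (z/2) ^ (α-2) := Real.rpow_le_rpow_of_nonpos hz2 hxa h
          have h2' : (0:ℝ) ≤ (2*z) ^ (α-2) := by positivity
          rw [hC]; linarith
        · have : x ^ (α-2) ≤ (2*z) ^ (α-2) := Real.rpow_le_rpow hx0.le hxb h.le
          have h2' : (0:ℝ) ≤ (z/2) ^ (α-2) := by positivity
          rw [hC]; linarith
      have h3 : |(n:ℝ)*α+α-1| ≤ (α+1) * ((n:ℝ)+1) := by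
        have hn : (0:ℝ) ≤ (n:ℝ) := Nat.cast_nonneg n
        rw [abs_le]; constructor <;> nlinarith
      have e1 : ‖((-lam) ^ n / Real.Gamma ((n : ℝ) * α + α)) *
          (((n:ℝ)*α+α-1) * x ^ ((n:ℝ)*α+α-2))‖
          = |lam| ^ n / Real.Gamma ((n : ℝ) * α + α) * |(n:ℝ)*α+α-1|
            * (x ^ ((n:ℝ)*α) * x ^ (α-2)) := by
        rw [← hsplit, Real.norm_eq_abs, abs_mul, abs_mul, abs_div, abs_pow, abs_neg,
          abs_of_pos (hΓpos n), abs_of_pos (Real.rpow_pos_of_pos hx0 _)]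
        ring
      rw [e1]
      calc |lam| ^ n / Real.Gamma ((n : ℝ) * α + α) * |(n:ℝ)*α+α-1|
            * (x ^ ((n:ℝ)*α) * x ^ (α-2))
          ≤ |lam| ^ n / Real.Gamma ((n : ℝ) * α + α) * ((α+1) * ((n:ℝ)+1))
            * (((2*z) ^ α) ^ n * C) := by
            have hb1 : (0:ℝ) ≤ x ^ ((n:ℝ)*α) := (Real.rpow_pos_of_pos hx0 _).le
            have hb2 : (0:ℝ) ≤ x ^ (α-2) := (Real.rpow_pos_of_pos hx0 _).le
            have hA : (0:ℝ) ≤ |lam| ^ n / Real.Gamma ((n : ℝ) * α + α) :=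
              div_nonneg (by positivity) (hΓpos n).le
            exact mul_le_mul (mul_le_mul_of_nonneg_left h3 hA)
              (mul_le_mul h1 h2 hb2 (by positivity)) (mul_nonneg hb1 hb2)
              (mul_nonneg hA (by positivity))
        _ = (α+1) * C * (q ^ n * ((n:ℝ)+1) / Real.Gamma ((n : ℝ) * α + α)) := by
            rw [hq, mul_pow]; ring
    · -- summability at the center point z
      refine Summable.of_norm_bounded
        (g := fun n => z ^ (α-1) * ((|lam| * z ^ α) ^ n * ((n:ℝ)+1) / Real.Gamma ((n : ℝ) * α + α)))
        ((summable_aux α α hα (by positivity)).mul_left _) (fun n => ?_)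
      have hsplit : z ^ ((n:ℝ)*α+α-1) = z ^ ((n:ℝ)*α) * z ^ (α-1) := by
        rw [← Real.rpow_add hz]; ring_nf
      have hzk : z ^ ((n:ℝ)*α) = (z ^ α) ^ n := by
        rw [mul_comm, Real.rpow_mul hz.le, Real.rpow_natCast]
      have e1 : ‖((-lam) ^ n / Real.Gamma ((n : ℝ) * α + α)) * z ^ ((n:ℝ)*α+α-1)‖
          = |lam| ^ n / Real.Gamma ((n : ℝ) * α + α) * ((z ^ α) ^ n * z ^ (α-1)) := by
        rw [hsplit, hzk, Real.norm_eq_abs, abs_mul, abs_div, abs_pow, abs_neg,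
          abs_of_pos (hΓpos n), abs_of_pos (mul_pos (pow_pos (Real.rpow_pos_of_pos hz α) n)
            (Real.rpow_pos_of_pos hz _))]
      rw [e1]
      show _ ≤ z ^ (α-1) * ((|lam| * z ^ α) ^ n * ((n:ℝ)+1) / Real.Gamma ((n : ℝ) * α + α))
      rw [mul_pow]
      have h1 : (1:ℝ) ≤ (n:ℝ) + 1 := by
        have : (0:ℝ) ≤ (n:ℝ) := Nat.cast_nonneg n
        linarith
      have base : 0 ≤ |lam| ^ n * (z ^ α) ^ n / Real.Gamma ((n : ℝ) * α + α) :=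
        div_nonneg (by positivity) (hΓpos n).le
      calc |lam| ^ n / Real.Gamma ((n : ℝ) * α + α) * ((z ^ α) ^ n * z ^ (α-1))
          = |lam| ^ n * (z ^ α) ^ n / Real.Gamma ((n : ℝ) * α + α) * z ^ (α-1) * 1 := by ring
        _ ≤ |lam| ^ n * (z ^ α) ^ n / Real.Gamma ((n : ℝ) * α + α) * z ^ (α-1) * ((n:ℝ)+1) := by
            exact mul_le_mul_of_nonneg_left h1
              (mul_nonneg base (Real.rpow_nonneg hz.le _))
        _ = z ^ (α-1) * (|lam| ^ n * (z ^ α) ^ n * ((n:ℝ)+1) / Real.Gamma ((n : ℝ) * α + α)) := by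
            ring
  -- now identify the function and the derivative
  have heq : (fun x : ℝ => x ^ (α - 1) * mittagLeffler α α (-lam * x ^ α)) =ᶠ[nhds z]
      (fun y : ℝ => ∑' n : ℕ, ((-lam) ^ n / Real.Gamma ((n : ℝ) * α + α)) * y ^ ((n:ℝ)*α+α-1)) := by
    filter_upwards [Ioo_mem_nhds (show z/2 < z by linarith) (show z < 2*z by linarith)] with x hx
    have hx0 : (0:ℝ) < x := lt_trans hz2 hx.1
    rw [mittagLeffler, ← tsum_mul_left]
    refine tsum_congr fun k => ?_
    have hneg : (-lam * x ^ α) ^ k = (-lam) ^ k * (x ^ α) ^ k := by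
      rw [show -lam * x ^ α = (-lam) * x ^ α by ring, mul_pow]
    have hzk : (x ^ α) ^ k = x ^ ((k:ℝ)*α) := by
      rw [mul_comm, Real.rpow_mul hx0.le, Real.rpow_natCast]
    have hsplit : x ^ ((k:ℝ)*α+α-1) = x ^ ((k:ℝ)*α) * x ^ (α-1) := by
      rw [← Real.rpow_add hx0]; ring_nf
    rw [hneg, hzk, hsplit]
    ring
  refine HasDerivAt.congr_of_eventuallyEq ?_ heq
  refine key.congr_deriv (Eq.symm ?_)
  rw [mittagLeffler, ← tsum_mul_left]
  refine tsum_congr fun k => ?_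
  have hneg : (-lam * z ^ α) ^ k = (-lam) ^ k * (z ^ α) ^ k := by
    rw [show -lam * z ^ α = (-lam) * z ^ α by ring, mul_pow]
  have hzk : (z ^ α) ^ k = z ^ ((k:ℝ)*α) := by
    rw [mul_comm, Real.rpow_mul hz.le, Real.rpow_natCast]
  have hsplit : z ^ ((k:ℝ)*α+α-2) = z ^ ((k:ℝ)*α) * z ^ (α-2) := by
    rw [← Real.rpow_add hz]; ring_nf
  have hG : ((k:ℝ)*α+α-1) / Real.Gamma ((k:ℝ)*α+α) = 1 / Real.Gamma ((k:ℝ)*α+α-1) := by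
    have h := gamma_div_aux ((k:ℝ)*α+α-1)
    rwa [sub_add_cancel] at h
  calc z ^ (α-2) * ((-lam * z ^ α) ^ k / Real.Gamma ((k:ℝ)*α + (α-1)))
      = (-lam) ^ k * z ^ ((k:ℝ)*α) * z ^ (α-2) * (1 / Real.Gamma ((k:ℝ)*α+α-1)) := by
        rw [hneg, hzk, show (k:ℝ)*α + (α-1) = (k:ℝ)*α+α-1 by ring]; ring
    _ = (-lam) ^ k * z ^ ((k:ℝ)*α) * z ^ (α-2) * (((k:ℝ)*α+α-1) / Real.Gamma ((k:ℝ)*α+α)) := by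
        rw [hG]
    _ = ((-lam) ^ k / Real.Gamma ((k:ℝ)*α+α)) * (((k:ℝ)*α+α-1) * z ^ ((k:ℝ)*α+α-2)) := by
        rw [hsplit]; ring
end

section
/- For 0 < α ≤ 1 and every x ≥ 0, E_{α,α}(-x) ≥ 0. -/
open Real Filter Finset Topology

noncomputable section

namespace MLpf


/-- generalized binomial coefficient `x(x-1)⋯(x-j+1)/j!` -/
noncomputable def B (x : ℝ) (j : ℕ) : ℝ :=
  (∏ i ∈ Finset.range j, (x - i)) / (Nat.factorial j : ℝ)

/-- ascending factorial `s(s+1)⋯(s+n-1)` -/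
noncomputable def P (s : ℝ) (n : ℕ) : ℝ := ∏ i ∈ Finset.range n, (s + i)

lemma ascP_eval (x : ℝ) (j : ℕ) : (ascPochhammer ℝ j).eval x = P x j := by
  unfold P
  induction j with
  | zero => simp
  | succ n ih => rw [ascPochhammer_succ_eval, ih, prod_range_succ]

lemma ring_choose_eq (x : ℝ) (j : ℕ) : Ring.choose x j = B x j := by
  have h := Ring.descPochhammer_eq_factorial_smul_choose x j
  rw [Polynomial.descPochhammer_smeval_eq_ascPochhammer, Polynomial.ascPochhammer_smeval_eq_eval,
    ascP_eval] at h
  have h2 : P (x - (j:ℝ) + 1) j = ∏ i ∈ Finset.range j, (x - i) := by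
    unfold P
    rw [← prod_range_reflect]
    refine prod_congr rfl fun i hi => ?_
    have hij : i < j := mem_range.mp hi
    have hcast : ((j - 1 - i : ℕ) : ℝ) = (j : ℝ) - 1 - i := by
      have h1 : i ≤ j - 1 := by omega
      have h2' : 1 ≤ j := by omega
      push_cast [Nat.cast_sub h1, Nat.cast_sub h2']
      ring
    rw [hcast]; ring
  rw [h2] at h
  have hj : (Nat.factorial j : ℝ) ≠ 0 := by positivity
  unfold B
  rw [h, nsmul_eq_mul]
  field_simp

/-- Chu--Vandermonde for real upper arguments. -/
lemma vandermonde (x y : ℝ) (n : ℕ) :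
    ∑ j ∈ Finset.range (n+1), B x j * B y (n - j) = B (x + y) n := by
  have h := Ring.add_choose_eq n (Commute.all x y)
  rw [Finset.Nat.sum_antidiagonal_eq_sum_range_succ_mk] at h
  simp only [ring_choose_eq] at h
  rw [← h]

lemma P_div_eq (γ : ℝ) (k : ℕ) : P γ k / (Nat.factorial k : ℝ) = (-1)^k * B (-γ) k := by
  unfold P B
  have h1 : ∏ i ∈ range k, (-γ - (i:ℝ)) = (-1)^k * ∏ i ∈ range k, (γ + i) := by
    rw [show ∏ i ∈ range k, (-γ - (i:ℝ)) = ∏ i ∈ range k, ((-1) * (γ + i)) from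
      prod_congr rfl fun i _ => by ring]
    rw [Finset.prod_mul_distrib, Finset.prod_const, Finset.card_range]
  rw [h1]
  rw [mul_div_assoc, ← mul_assoc, ← pow_add]
  have h2 : (-1 : ℝ)^(k+k) = 1 := by
    rw [← two_mul, pow_mul]
    norm_num
  rw [h2, one_mul]

lemma key_I1 (α β : ℝ) (n : ℕ) :
    ∑ j ∈ Finset.range (n+1), (-1)^j * B α j * (P β (n-j) / (Nat.factorial (n-j) : ℝ))
      = P (β - α) n / (Nat.factorial n : ℝ) := by
  have h1 : ∀ j ∈ Finset.range (n+1),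
      (-1)^j * B α j * (P β (n-j) / (Nat.factorial (n-j) : ℝ))
        = (-1)^n * (B α j * B (-β) (n-j)) := by
    intro j hj
    have hjn : j ≤ n := by simpa using Nat.lt_succ_iff.mp (mem_range.mp hj)
    rw [P_div_eq]
    have : (-1:ℝ)^j * (-1)^(n-j) = (-1)^n := by
      rw [← pow_add]
      congr 1
      omega
    calc (-1:ℝ)^j * B α j * ((-1)^(n-j) * B (-β) (n-j))
        = ((-1:ℝ)^j * (-1)^(n-j)) * (B α j * B (-β) (n-j)) := by ring
      _ = (-1:ℝ)^n * (B α j * B (-β) (n-j)) := by rw [this]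
  rw [Finset.sum_congr rfl h1, ← Finset.mul_sum, vandermonde]
  rw [P_div_eq]
  rw [show -(β - α) = α + -β by ring]

lemma P_nonneg {s : ℝ} (hs : 0 ≤ s) (n : ℕ) : 0 ≤ P s n := by
  unfold P
  exact Finset.prod_nonneg fun i _ => by positivity

lemma P_pos {s : ℝ} (hs : 0 < s) (n : ℕ) : 0 < P s n := by
  unfold P
  exact Finset.prod_pos fun i _ => by positivity

lemma P_le {s : ℝ} {M : ℝ} (hs : 0 ≤ s) (hM : s ≤ M) (hM1 : 1 ≤ M) (n : ℕ) :
    P s n ≤ (((n:ℝ)+1) * M)^n := by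
  unfold P
  calc ∏ i ∈ Finset.range n, (s + (i:ℝ))
      ≤ ∏ _i ∈ Finset.range n, (((n:ℝ)+1)*M) := by
        refine Finset.prod_le_prod (fun i _ => by positivity) (fun i hi => ?_)
        have hi' : (i:ℝ) + 1 ≤ (n:ℝ) := by exact_mod_cast Nat.succ_le_of_lt (mem_range.mp hi)
        nlinarith
    _ = (((n:ℝ)+1)*M)^n := by rw [Finset.prod_const, Finset.card_range]

/-- coefficient of the series for `T` -/
noncomputable def b (α : ℝ) (n m : ℕ) : ℝ := P (α * (m+1)) n / (Nat.factorial n : ℝ)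

lemma b_nonneg {α : ℝ} (hα : 0 ≤ α) (n m : ℕ) : 0 ≤ b α n m := by
  unfold b
  have := P_nonneg (s := α * (m+1)) (by positivity) n
  positivity

lemma summable_aux {c : ℝ} (hc0 : 0 ≤ c) (hc1 : c < 1) (n : ℕ) :
    Summable (fun m : ℕ => ((m:ℝ)+1)^n * c^m) := by
  have h1 : Summable (fun m : ℕ => ((m:ℝ)^n + 1) * c^m) := by
    have := summable_pow_mul_geometric_of_norm_lt_one (R := ℝ) n
      (r := c) (by rwa [Real.norm_eq_abs, abs_of_nonneg hc0])
    have h2 : Summable (fun m : ℕ => c^m) := summable_geometric_of_lt_one hc0 hc1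
    simpa [add_mul] using this.add h2
  have h2 : Summable (fun m : ℕ => (2:ℝ)^n * (((m:ℝ)^n + 1) * c^m)) := h1.mul_left _
  refine Summable.of_nonneg_of_le (fun m => by positivity) (fun m => ?_) h2
  have key : ((m:ℝ)+1)^n ≤ (2:ℝ)^n * ((m:ℝ)^n + 1) := by
    rcases Nat.eq_zero_or_pos m with rfl | hm
    · have h2n : (1:ℝ) ≤ 2^n := one_le_pow₀ (by norm_num)
      have h0n : (0:ℝ) ≤ (0:ℝ)^n := by positivity
      simp only [Nat.cast_zero, zero_add, one_pow]
      nlinarith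
    · have h1m : (1:ℝ) ≤ m := by exact_mod_cast hm
      have : ((m:ℝ)+1)^n ≤ (2*(m:ℝ))^n := by
        apply pow_le_pow_left₀ (by positivity)
        linarith
      rw [mul_pow] at this
      nlinarith [pow_nonneg (show (0:ℝ) ≤ m by positivity) n,
        pow_pos (show (0:ℝ) < 2 by norm_num) n]
  have hcm : (0:ℝ) ≤ c^m := by positivity
  nlinarith [key, hcm, mul_le_mul_of_nonneg_right key hcm]

section Tdef

variable {α c : ℝ}

/-- the discretized solution coefficients -/
noncomputable def T (α c : ℝ) (n : ℕ) : ℝ := ∑' m : ℕ, (-c)^m * b α n m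

lemma summable_T (hα0 : 0 < α) (hα1 : α ≤ 1) (hc0 : 0 ≤ c) (hc1 : c < 1) (n : ℕ) :
    Summable (fun m : ℕ => (-c)^m * b α n m) := by
  have h := (summable_aux hc0 hc1 n).mul_left (((n:ℝ)+1)^n)
  refine Summable.of_norm_bounded h (fun m => ?_)
  rw [Real.norm_eq_abs, abs_mul, abs_pow, abs_neg, abs_of_nonneg hc0,
    abs_of_nonneg (b_nonneg hα0.le n m)]
  have hb : b α n m ≤ (((n:ℝ)+1) * ((m:ℝ)+1))^n := by
    unfold b
    have hfac : (1:ℝ) ≤ (Nat.factorial n : ℝ) := by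
      exact_mod_cast Nat.one_le_iff_ne_zero.mpr (Nat.factorial_ne_zero n)
    have hP : P (α * (m+1)) n ≤ (((n:ℝ)+1) * ((m:ℝ)+1))^n :=
      P_le (by positivity) (by nlinarith [Nat.cast_nonneg (α := ℝ) m])
        (by nlinarith [Nat.cast_nonneg (α := ℝ) m]) n
    have hPn := P_nonneg (s := α * (m+1)) (by positivity) n
    have hd : P (α * (m+1)) n / (Nat.factorial n : ℝ) ≤ P (α * (m+1)) n := by
      rw [div_le_iff₀ (by positivity)]
      nlinarith
    exact hd.trans hP
  calc c^m * b α n m ≤ c^m * (((n:ℝ)+1) * ((m:ℝ)+1))^n := by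
        apply mul_le_mul_of_nonneg_left hb (by positivity)
    _ = ((n:ℝ)+1)^n * (((m:ℝ)+1)^n * c^m) := by rw [mul_pow]; ring

end Tdef

lemma B_zero (x : ℝ) : B x 0 = 1 := by simp [B]

lemma P_zero {n : ℕ} (hn : 1 ≤ n) : P 0 n = 0 := by
  unfold P
  refine Finset.prod_eq_zero (Finset.mem_range.mpr (show 0 < n from hn)) ?_
  norm_num

lemma summable_S2 {α c : ℝ} (hα0 : 0 < α) (hα1 : α ≤ 1) (hc0 : 0 ≤ c) (hc1 : c < 1) (n : ℕ) :
    Summable (fun m : ℕ => (-c)^m * (P (α * m) n / (Nat.factorial n : ℝ))) := by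
  have h := (summable_aux hc0 hc1 n).mul_left (((n:ℝ)+1)^n)
  refine Summable.of_norm_bounded h (fun m => ?_)
  have hPn := P_nonneg (s := α * m) (by positivity) n
  rw [Real.norm_eq_abs, abs_mul, abs_pow, abs_neg, abs_of_nonneg hc0,
    abs_of_nonneg (by positivity)]
  have hP : P (α * m) n ≤ (((n:ℝ)+1) * ((m:ℝ)+1))^n :=
    P_le (by positivity) (by nlinarith [Nat.cast_nonneg (α := ℝ) m])
      (by nlinarith [Nat.cast_nonneg (α := ℝ) m]) n
  have hfac : (1:ℝ) ≤ (Nat.factorial n : ℝ) := by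
    exact_mod_cast Nat.one_le_iff_ne_zero.mpr (Nat.factorial_ne_zero n)
  have hd : P (α * m) n / (Nat.factorial n : ℝ) ≤ P (α * m) n := by
    rw [div_le_iff₀ (by positivity)]
    nlinarith
  calc c^m * (P (α * m) n / (Nat.factorial n : ℝ)) ≤ c^m * (((n:ℝ)+1) * ((m:ℝ)+1))^n := by
        apply mul_le_mul_of_nonneg_left (hd.trans hP) (by positivity)
    _ = ((n:ℝ)+1)^n * (((m:ℝ)+1)^n * c^m) := by rw [mul_pow]; ring

lemma conv_identity {α c : ℝ} (hα0 : 0 < α) (hα1 : α ≤ 1) (hc0 : 0 ≤ c) (hc1 : c < 1)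
    {n : ℕ} (hn : 1 ≤ n) :
    (1+c) * T α c n = ∑ j ∈ Finset.range n, (-1)^j * B α (j+1) * T α c (n-1-j) := by
  have hsum : ∀ k : ℕ, Summable (fun m : ℕ => (-c)^m * b α k m) :=
    fun k => summable_T hα0 hα1 hc0 hc1 k
  -- A = sum over j of the convolution
  have step1 : ∑ j ∈ Finset.range (n+1), (-1:ℝ)^j * B α j * T α c (n-j)
      = ∑' m : ℕ, ∑ j ∈ Finset.range (n+1), ((-1:ℝ)^j * B α j) * ((-c)^m * b α (n-j) m) := by
    have h := Summable.tsum_finsetSum (f := fun j (m : ℕ) => ((-1:ℝ)^j * B α j) * ((-c)^m * b α (n-j) m))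
      (s := Finset.range (n+1)) (fun j _ => ((hsum (n-j)).mul_left _))
    have e1 : ∀ j ∈ Finset.range (n+1), (-1:ℝ)^j * B α j * T α c (n-j)
        = ∑' m : ℕ, ((-1:ℝ)^j * B α j) * ((-c)^m * b α (n-j) m) := fun j _ => by
      rw [T, ← tsum_mul_left]
    rw [Finset.sum_congr rfl e1]
    simpa using h.symm
  have step2 : ∀ m : ℕ, ∑ j ∈ Finset.range (n+1), ((-1:ℝ)^j * B α j) * ((-c)^m * b α (n-j) m)
      = (-c)^m * (P (α * m) n / (Nat.factorial n : ℝ)) := by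
    intro m
    have h := key_I1 α (α * (m+1)) n
    have harg : α * (m+1) - α = α * m := by ring
    rw [harg] at h
    rw [← h, Finset.mul_sum]
    refine Finset.sum_congr rfl fun j _ => ?_
    unfold b
    ring
  have step3 : ∑' m : ℕ, (-c)^m * (P (α * m) n / (Nat.factorial n : ℝ)) = -c * T α c n := by
    rw [Summable.tsum_eq_zero_add (summable_S2 hα0 hα1 hc0 hc1 n)]
    have h0 : (-c)^0 * (P (α * (0:ℕ)) n / (Nat.factorial n : ℝ)) = 0 := by
      norm_num [P_zero hn]
    rw [h0, zero_add]
    have hterm : ∀ m : ℕ, (-c)^(m+1) * (P (α * ((m+1 : ℕ) : ℝ)) n / (Nat.factorial n : ℝ))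
        = (-c) * ((-c)^m * b α n m) := by
      intro m
      rw [pow_succ, b]
      push_cast
      ring
    rw [tsum_congr hterm, tsum_mul_left, T]
  have step4 : ∑ j ∈ Finset.range (n+1), (-1:ℝ)^j * B α j * T α c (n-j)
      = (∑ j ∈ Finset.range n, (-1:ℝ)^(j+1) * B α (j+1) * T α c (n-1-j)) + T α c n := by
    rw [Finset.sum_range_succ']
    congr 1
    · refine Finset.sum_congr rfl fun j hj => ?_
      congr 2
      omega
    · simp [B_zero]
  have main : (∑ j ∈ Finset.range n, (-1:ℝ)^(j+1) * B α (j+1) * T α c (n-1-j)) + T α c n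
      = -c * T α c n := by
    rw [← step4, step1, tsum_congr step2, step3]
  have : ∑ j ∈ Finset.range n, (-1:ℝ)^(j+1) * B α (j+1) * T α c (n-1-j)
      = - ∑ j ∈ Finset.range n, (-1:ℝ)^j * B α (j+1) * T α c (n-1-j) := by
    rw [← Finset.sum_neg_distrib]
    refine Finset.sum_congr rfl fun j _ => ?_
    rw [pow_succ]
    ring
  rw [this] at main
  linarith

lemma g_nonneg {α : ℝ} (hα0 : 0 ≤ α) (hα1 : α ≤ 1) (j : ℕ) :
    0 ≤ (-1:ℝ)^j * B α (j+1) := by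
  have key : ∀ j : ℕ, 0 ≤ (-1:ℝ)^j * ∏ i ∈ Finset.range (j+1), (α - i) := by
    intro j
    induction j with
    | zero => simpa using hα0
    | succ k ih =>
      rw [Finset.prod_range_succ, pow_succ]
      have hfac : α - ((k:ℝ)+1) ≤ 0 := by
        have hk : (0:ℝ) ≤ (k:ℝ) := Nat.cast_nonneg k
        linarith
      push_cast
      nlinarith
  unfold B
  have h1 := key j
  have heq : (-1:ℝ)^j * ((∏ i ∈ Finset.range (j+1), (α - i)) / (Nat.factorial (j+1) : ℝ))
      = ((-1:ℝ)^j * ∏ i ∈ Finset.range (j+1), (α - i)) / (Nat.factorial (j+1) : ℝ) := by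
    ring
  rw [heq]
  exact div_nonneg h1 (by positivity)

lemma T_nonneg {α c : ℝ} (hα0 : 0 < α) (hα1 : α ≤ 1) (hc0 : 0 ≤ c) (hc1 : c < 1) (n : ℕ) :
    0 ≤ T α c n := by
  induction n using Nat.strong_induction_on with
  | _ n ih =>
    rcases Nat.eq_zero_or_pos n with rfl | hn
    · have : T α c 0 = (1 - (-c))⁻¹ := by
        rw [T]
        have : ∀ m : ℕ, (-c)^m * b α 0 m = (-c)^m := by
          intro m; simp [b, P]
        rw [tsum_congr this]
        exact tsum_geometric_of_norm_lt_one (by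
          rw [Real.norm_eq_abs, abs_neg, abs_of_nonneg hc0]; exact hc1)
      rw [this]
      exact inv_nonneg.mpr (by linarith)
    · have h := conv_identity hα0 hα1 hc0 hc1 hn
      have hrhs : 0 ≤ ∑ j ∈ Finset.range n, (-1:ℝ)^j * B α (j+1) * T α c (n-1-j) := by
        refine Finset.sum_nonneg fun j hj => ?_
        exact mul_nonneg (g_nonneg hα0.le hα1 j) (ih (n-1-j) (by omega))
      nlinarith

/-- scaled coefficient -/
noncomputable def w (α : ℝ) (n m : ℕ) : ℝ := (n:ℝ)^((1:ℝ) - α*(m+1)) * b α n m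

lemma w_eq {α : ℝ} (hα0 : 0 < α) (m : ℕ) {n : ℕ} (hn : 1 ≤ n) :
    w α n m = ((n:ℝ)/(α*(m+1)+n)) / Real.GammaSeq (α*(m+1)) n := by
  set s : ℝ := α*(m+1) with hs_def
  have hs : 0 < s := by positivity
  have hn0 : (0:ℝ) < n := by exact_mod_cast hn
  have hP := P_pos hs n
  have hfac : (0:ℝ) < (Nat.factorial n : ℝ) := by positivity
  have hns : (0:ℝ) < (n:ℝ)^s := Real.rpow_pos_of_pos hn0 s
  have hprod : ∏ j ∈ Finset.range (n+1), (s + (j:ℝ)) = P s n * (s + n) := by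
    rw [Finset.prod_range_succ]; rfl
  have hsn : (0:ℝ) < s + n := by positivity
  rw [w, b, Real.GammaSeq, hprod, Real.rpow_sub hn0, Real.rpow_one]
  field_simp
  ring

lemma w_tendsto {α : ℝ} (hα0 : 0 < α) (m : ℕ) :
    Tendsto (fun n : ℕ => w α n m) atTop (𝓝 (1 / Real.Gamma (α*(m+1)))) := by
  set s : ℝ := α*(m+1) with hs_def
  have hs : 0 < s := by positivity
  have h1 : Tendsto (fun n : ℕ => s/(n:ℝ)) atTop (𝓝 0) :=
    tendsto_const_div_atTop_nhds_zero_nat s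
  have h2 : Tendsto (fun n : ℕ => (1:ℝ)/(s/(n:ℝ)+1)) atTop (𝓝 1) := by
    have h := Tendsto.div (tendsto_const_nhds (x := (1:ℝ)))
      (h1.add (tendsto_const_nhds (x := (1:ℝ)))) (by norm_num)
    have : ((fun _ : ℕ => (1:ℝ)) / fun n : ℕ => s / ↑n + 1) = fun n : ℕ => (1:ℝ)/(s/(n:ℝ)+1) := by
      funext n; simp [Pi.div_apply]
    simpa [this] using h
  have h3 : Tendsto (fun n : ℕ => ((n:ℝ)/(s+n))) atTop (𝓝 1) := by
    refine h2.congr' ?_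
    filter_upwards [eventually_ge_atTop 1] with n hn
    have hn0 : (0:ℝ) < n := by exact_mod_cast hn
    have hsn : (0:ℝ) < s + n := by positivity
    field_simp
  have hΓ : Real.Gamma s ≠ 0 := (Real.Gamma_pos_of_pos hs).ne'
  have h4 : Tendsto (fun n : ℕ => ((n:ℝ)/(s+n)) / Real.GammaSeq s n) atTop
      (𝓝 (1 / Real.Gamma s)) := h3.div (Real.GammaSeq_tendsto_Gamma s) hΓ
  refine h4.congr' ?_
  filter_upwards [eventually_ge_atTop 1] with n hn
  exact (w_eq hα0 m hn).symm

lemma Gamma_P {s : ℝ} (hs : 0 < s) (n : ℕ) : Real.Gamma (s + n) = Real.Gamma s * P s n := by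
  induction n with
  | zero => simp [P]
  | succ k ih =>
    have hsk : s + (k:ℝ) ≠ 0 := by positivity
    have : s + ((k+1 : ℕ):ℝ) = (s + k) + 1 := by push_cast; ring
    rw [this, Real.Gamma_add_one hsk, ih]
    rw [show P s (k+1) = P s k * (s + k) from Finset.prod_range_succ _ _]
    ring

lemma logconv {a bb t : ℝ} (ha : 0 < a) (hb : 0 < bb) (ht0 : 0 ≤ t) (ht1 : t ≤ 1) :
    Real.Gamma ((1-t)*a + t*bb) ≤ Real.Gamma a ^ (1-t) * Real.Gamma bb ^ t := by
  have hmem_a : a ∈ Set.Ioi (0:ℝ) := ha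
  have hmem_b : bb ∈ Set.Ioi (0:ℝ) := hb
  have h := Real.convexOn_log_Gamma.2 hmem_a hmem_b (show (0:ℝ) ≤ 1 - t by linarith) ht0
    (by ring)
  simp only [smul_eq_mul, Function.comp_apply] at h
  have hc : 0 < (1-t)*a + t*bb := by nlinarith [mul_nonneg ht0 hb.le, mul_nonneg (show (0:ℝ) ≤ 1 - t by linarith) ha.le]
  have hΓc := Real.Gamma_pos_of_pos hc
  have hΓa := Real.Gamma_pos_of_pos ha
  have hΓb := Real.Gamma_pos_of_pos hb
  calc Real.Gamma ((1-t)*a + t*bb)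
      = Real.exp (Real.log (Real.Gamma ((1-t)*a + t*bb))) := (Real.exp_log hΓc).symm
    _ ≤ Real.exp ((1-t) * Real.log (Real.Gamma a) + t * Real.log (Real.Gamma bb)) :=
        Real.exp_le_exp.mpr h
    _ = Real.Gamma a ^ (1-t) * Real.Gamma bb ^ t := by
        rw [Real.exp_add, Real.rpow_def_of_pos hΓa, Real.rpow_def_of_pos hΓb,
          mul_comm (Real.log (Real.Gamma a)), mul_comm (Real.log (Real.Gamma bb))]

lemma P_le_pow {s' : ℝ} (hs' : 0 ≤ s') (q : ℕ) : P s' q ≤ (s' + q)^q := by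
  unfold P
  calc ∏ i ∈ Finset.range q, (s' + (i:ℝ)) ≤ ∏ _i ∈ Finset.range q, (s' + (q:ℝ)) := by
        refine Finset.prod_le_prod (fun i _ => by positivity) (fun i hi => ?_)
        have : (i:ℝ) ≤ q := by
          have := Finset.mem_range.mp hi; exact_mod_cast this.le
        linarith
    _ = (s' + q)^q := by rw [Finset.prod_const, Finset.card_range]

lemma regimeA {α : ℝ} {m n : ℕ} (hα0 : 0 < α) (hn : 1 ≤ n) (hsn : α*(m+1) ≤ n) :
    w α n m ≤ Real.exp (α*(m+1)+1) / Real.Gamma (α*(m+1)) := by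
  set s : ℝ := α*(m+1) with hs_def
  have hs : 0 < s := by positivity
  have hn0 : (0:ℝ) < n := by exact_mod_cast hn
  set q : ℕ := ⌈s⌉₊ with hq_def
  have hq1 : 1 ≤ q := Nat.one_le_iff_ne_zero.mpr (by
    simp only [hq_def, ne_eq, Nat.ceil_eq_zero, not_le]; exact hs)
  have hsq : s ≤ q := Nat.le_ceil s
  have hqn : q ≤ n := by
    rw [hq_def]
    exact Nat.ceil_le.mpr hsn
  have hqs1 : (q:ℝ) ≤ s + 1 := by
    have := Nat.ceil_lt_add_one hs.le
    linarith
  have hq0 : (0:ℝ) < q := by exact_mod_cast hq1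
  set t : ℝ := s / q with ht_def
  have ht0 : 0 ≤ t := by positivity
  have ht1 : t ≤ 1 := by
    rw [ht_def, div_le_one hq0]; exact hsq
  -- log-convexity step
  have hcombo : (1-t)*(n:ℝ) + t*((n:ℝ)+q) = (n:ℝ) + s := by
    have : t * q = s := by
      rw [ht_def]; field_simp
    nlinarith [this]
  have hlc := logconv (a := (n:ℝ)) (bb := (n:ℝ)+q) hn0 (by positivity) ht0 ht1
  rw [hcombo] at hlc
  have hΓn := Real.Gamma_pos_of_pos hn0
  -- Gamma (n+q) = Gamma n * P n q
  have hGnq : Real.Gamma ((n:ℝ)+q) = Real.Gamma (n:ℝ) * P (n:ℝ) q := Gamma_P hn0 q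
  have hPnq_pos : 0 < P (n:ℝ) q := P_pos hn0 q
  have hstep : Real.Gamma ((n:ℝ) + s) ≤ Real.Gamma (n:ℝ) * ((n:ℝ)+q)^s := by
    have h1 : Real.Gamma (n:ℝ) ^ (1-t) * Real.Gamma ((n:ℝ)+q) ^ t
        = Real.Gamma (n:ℝ) * (P (n:ℝ) q) ^ t := by
      rw [hGnq, Real.mul_rpow hΓn.le hPnq_pos.le, ← mul_assoc, ← Real.rpow_add hΓn]
      norm_num
    have h2 : (P (n:ℝ) q) ^ t ≤ ((n:ℝ)+q)^s := by
      have hb1 : P (n:ℝ) q ≤ ((n:ℝ)+q)^q := P_le_pow hn0.le q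
      have hb2 : (P (n:ℝ) q) ^ t ≤ (((n:ℝ)+q)^q : ℝ) ^ t :=
        Real.rpow_le_rpow hPnq_pos.le hb1 ht0
      calc (P (n:ℝ) q) ^ t ≤ (((n:ℝ)+q)^q : ℝ) ^ t := hb2
        _ = ((n:ℝ)+q) ^ ((q:ℝ) * t) := by
            rw [← Real.rpow_natCast ((n:ℝ)+q) q, ← Real.rpow_mul (by positivity)]
        _ = ((n:ℝ)+q) ^ s := by
            congr 1
            rw [ht_def]
            field_simp
    calc Real.Gamma ((n:ℝ) + s) ≤ Real.Gamma (n:ℝ) ^ (1-t) * Real.Gamma ((n:ℝ)+q) ^ t := hlc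
      _ = Real.Gamma (n:ℝ) * (P (n:ℝ) q) ^ t := h1
      _ ≤ Real.Gamma (n:ℝ) * ((n:ℝ)+q)^s := by
          exact mul_le_mul_of_nonneg_left h2 hΓn.le
  -- express w via Gamma
  have hΓs := Real.Gamma_pos_of_pos hs
  have hfac : (Nat.factorial n : ℝ) = (n:ℝ) * Real.Gamma (n:ℝ) := by
    rw [← Real.Gamma_nat_eq_factorial, Real.Gamma_add_one hn0.ne']
  have hPsn : P s n = Real.Gamma (s + (n:ℝ)) / Real.Gamma s := by
    rw [Gamma_P hs n]
    field_simp
  have hw : w α n m = (n:ℝ)^((1:ℝ)-s) * (Real.Gamma (s + n) / (Real.Gamma s * ((n:ℝ) * Real.Gamma (n:ℝ)))) := by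
    rw [w, b, hPsn, hfac]
    rw [div_div]
  rw [hw]
  have hrp : (0:ℝ) < (n:ℝ)^((1:ℝ)-s) := Real.rpow_pos_of_pos hn0 _
  have hden : (0:ℝ) < Real.Gamma s * ((n:ℝ) * Real.Gamma (n:ℝ)) := by positivity
  have hkey : (n:ℝ)^((1:ℝ)-s) * (Real.Gamma (s + n) / (Real.Gamma s * ((n:ℝ) * Real.Gamma (n:ℝ))))
      ≤ (n:ℝ)^((1:ℝ)-s) * ((Real.Gamma (n:ℝ) * ((n:ℝ)+q)^s) / (Real.Gamma s * ((n:ℝ) * Real.Gamma (n:ℝ)))) := by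
    apply mul_le_mul_of_nonneg_left _ hrp.le
    rw [add_comm s (n:ℝ)]
    gcongr
  refine hkey.trans ?_
  -- simplify: n^{1-s} * (Γn (n+q)^s)/(Γs * n * Γn) = ((n+q)/n)^s / Γ s
  have hsimp : (n:ℝ)^((1:ℝ)-s) * ((Real.Gamma (n:ℝ) * ((n:ℝ)+q)^s) / (Real.Gamma s * ((n:ℝ) * Real.Gamma (n:ℝ))))
      = (((n:ℝ)+q)/n)^s / Real.Gamma s := by
    rw [Real.rpow_sub hn0, Real.rpow_one, Real.div_rpow (by positivity) hn0.le]
    have hΓn' : Real.Gamma (n:ℝ) ≠ 0 := hΓn.ne'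
    have hns : ((n:ℝ))^s ≠ 0 := (Real.rpow_pos_of_pos hn0 s).ne'
    field_simp
  rw [hsimp]
  -- ((n+q)/n)^s ≤ exp(s+1)
  have hfinal : (((n:ℝ)+q)/n)^s ≤ Real.exp (s+1) := by
    have hu : (0:ℝ) < ((n:ℝ)+q)/n := by positivity
    have hlog : Real.log (((n:ℝ)+q)/n) ≤ (q:ℝ)/n := by
      have h1 : ((n:ℝ)+q)/n = 1 + (q:ℝ)/n := by field_simp
      rw [h1]
      have := Real.log_le_sub_one_of_pos (show (0:ℝ) < 1 + (q:ℝ)/n by positivity)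
      linarith
    have : (((n:ℝ)+q)/n)^s = Real.exp (Real.log (((n:ℝ)+q)/n) * s) := Real.rpow_def_of_pos hu s
    rw [this]
    apply Real.exp_le_exp.mpr
    have hbound : Real.log (((n:ℝ)+q)/n) * s ≤ ((q:ℝ)/n) * s :=
      mul_le_mul_of_nonneg_right hlog hs.le
    refine hbound.trans ?_
    -- q/n * s ≤ s + 1 using q ≤ s+1, s ≤ n
    rw [div_mul_eq_mul_div, div_le_iff₀ hn0]
    nlinarith
  gcongr

lemma log55 : (4:ℝ) ≤ Real.log 55 := by
  have h : Real.exp 4 ≤ 55 := by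
    have h1 : Real.exp 1 ≤ 2.7182818286 := Real.exp_one_lt_d9.le
    have h4 : Real.exp 4 = (Real.exp 1)^(4:ℕ) := by
      rw [← Real.exp_nat_mul]; norm_num
    have hpos : (0:ℝ) ≤ Real.exp 1 := (Real.exp_pos 1).le
    calc Real.exp 4 = (Real.exp 1)^(4:ℕ) := h4
      _ ≤ (2.7182818286:ℝ)^(4:ℕ) := by gcongr
      _ ≤ 55 := by norm_num
  have := Real.log_le_log (Real.exp_pos 4) h
  rwa [Real.log_exp] at this

lemma regimeB {α : ℝ} {m n : ℕ} (hα0 : 0 < α) (hn55 : 55 ≤ n) (hns : (n:ℝ) ≤ α*(m+1)) :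
    w α n m ≤ Real.exp (-(α*(m+1)) * Real.log n / 4) := by
  set s : ℝ := α*(m+1) with hs_def
  have hs : 0 < s := by positivity
  have hn0 : (0:ℝ) < n := by
    have : (0:ℕ) < n := by omega
    exact_mod_cast this
  have hn1 : (1:ℝ) ≤ n := by
    have : (1:ℕ) ≤ n := by omega
    exact_mod_cast this
  have hL : (4:ℝ) ≤ Real.log n := by
    refine log55.trans (Real.log_le_log (by norm_num) ?_)
    exact_mod_cast hn55
  have hs55 : (55:ℝ) ≤ s := le_trans (by exact_mod_cast hn55) hns
  have hP := P_pos hs n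
  have hfac : (0:ℝ) < (Nat.factorial n : ℝ) := by positivity
  have hw_pos : 0 < w α n m := by
    rw [w, b]
    have := Real.rpow_pos_of_pos hn0 ((1:ℝ) - s)
    positivity
  -- log w ≤ (1-s) log n + log P - log n!
  have hlogw : Real.log (w α n m)
      = ((1:ℝ)-s) * Real.log n + Real.log (P s n) - Real.log (Nat.factorial n : ℝ) := by
    rw [w, b, Real.log_mul (Real.rpow_pos_of_pos hn0 _).ne' (by positivity),
      Real.log_div hP.ne' hfac.ne', Real.log_rpow hn0]
    ring
  -- log P ≤ n log (2s)
  have hPle : P s n ≤ (2*s)^n := by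
    unfold P
    calc ∏ i ∈ Finset.range n, (s + (i:ℝ)) ≤ ∏ _i ∈ Finset.range n, (2*s) := by
          refine Finset.prod_le_prod (fun i _ => by positivity) (fun i hi => ?_)
          have hi' : (i:ℝ) ≤ (n:ℝ) := by
            have := Finset.mem_range.mp hi
            exact_mod_cast this.le
          linarith
      _ = (2*s)^n := by rw [Finset.prod_const, Finset.card_range]
  have hlogP : Real.log (P s n) ≤ (n:ℝ) * Real.log (2*s) := by
    calc Real.log (P s n) ≤ Real.log ((2*s)^n) := Real.log_le_log hP hPle
      _ = (n:ℝ) * Real.log (2*s) := by rw [Real.log_pow]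
  -- n log n - n ≤ log n!
  have hlogfac : (n:ℝ) * Real.log n - n ≤ Real.log (Nat.factorial n : ℝ) := by
    have h1 : ((n:ℝ))^n / (Nat.factorial n : ℝ) ≤ Real.exp n :=
      Real.pow_div_factorial_le_exp (x := (n:ℝ)) hn0.le n
    have h2 : ((n:ℝ))^n ≤ (Nat.factorial n : ℝ) * Real.exp n := by
      rw [div_le_iff₀ hfac] at h1
      linarith
    have h3 := Real.log_le_log (by positivity) h2
    rw [Real.log_pow, Real.log_mul hfac.ne' (Real.exp_pos _).ne', Real.log_exp] at h3
    linarith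
  -- n log(2s/n) ≤ 2s - n
  have hmid : (n:ℝ) * Real.log (2*s) - (n:ℝ) * Real.log n + n ≤ 2*s := by
    have h2sn : (0:ℝ) < 2*s/n := by positivity
    have h1 : Real.log (2*s/n) ≤ 2*s/n - 1 := Real.log_le_sub_one_of_pos h2sn
    have h2 : Real.log (2*s/n) = Real.log (2*s) - Real.log n :=
      Real.log_div (by positivity) hn0.ne'
    have h3 : (n:ℝ) * (Real.log (2*s) - Real.log n) ≤ (n:ℝ) * (2*s/n - 1) := by
      rw [← h2]
      exact mul_le_mul_of_nonneg_left h1 hn0.le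
    have h4 : (n:ℝ) * (2*s/n - 1) = 2*s - n := by field_simp
    nlinarith
  -- combine
  have hcomb : Real.log (w α n m) ≤ ((1:ℝ)-s) * Real.log n + 2*s := by
    rw [hlogw]
    nlinarith
  -- final: (1-s) L + 2s ≤ -s L /4
  have hfin : ((1:ℝ)-s) * Real.log n + 2*s ≤ -s * Real.log n / 4 := by
    set L := Real.log n
    nlinarith [mul_nonneg (show (0:ℝ) ≤ s by linarith) (show (0:ℝ) ≤ L - 4 by linarith),
      mul_nonneg (show (0:ℝ) ≤ s - 8 by linarith) (show (0:ℝ) ≤ L - 4 by linarith)]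
  calc w α n m = Real.exp (Real.log (w α n m)) := (Real.exp_log hw_pos).symm
    _ ≤ Real.exp (-s * Real.log n / 4) := Real.exp_le_exp.mpr (hcomb.trans hfin)

lemma Gamma_ratio_lower {α : ℝ} (hα0 : 0 < α) (hα1 : α ≤ 1) {y : ℝ} (hy : 0 < y) :
    y * Real.Gamma y ≤ Real.Gamma (y + α) * (y + α)^((1:ℝ)-α) := by
  have hya : (0:ℝ) < y + α := by linarith
  have h := logconv (a := y + α) (bb := y + α + 1) hya (by linarith) 
    (t := 1 - α) (by linarith) (by linarith)
  have hcombo : (1-(1-α))*(y+α) + (1-α)*(y+α+1) = y + 1 := by ring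
  rw [hcombo] at h
  have h1 : Real.Gamma (y+1) = y * Real.Gamma y := Real.Gamma_add_one hy.ne'
  have h2 : Real.Gamma (y+α+1) = (y+α) * Real.Gamma (y+α) := Real.Gamma_add_one hya.ne'
  have hΓya := Real.Gamma_pos_of_pos hya
  have h3 : Real.Gamma (y+α) ^ (1-(1-α)) * Real.Gamma (y+α+1) ^ (1-α)
      = Real.Gamma (y+α) * (y+α)^((1:ℝ)-α) := by
    rw [h2, Real.mul_rpow hya.le hΓya.le]
    rw [show (1:ℝ)-(1-α) = α by ring]
    rw [mul_comm ((y+α)^((1:ℝ)-α)) (Real.Gamma (y+α) ^ ((1:ℝ)-α)), ← mul_assoc,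
      ← Real.rpow_add hΓya]
    norm_num
  rw [h1, h3] at h
  exact h

lemma env1_summable {α x : ℝ} (hα0 : 0 < α) (hα1 : α ≤ 1) (hx : 0 < x) :
    Summable (fun m : ℕ => x^m * (Real.exp (α*(m+1)+1) / Real.Gamma (α*(m+1)))) := by
  set u : ℕ → ℝ := fun m => x^m * (Real.exp (α*(m+1)+1) / Real.Gamma (α*(m+1))) with hu
  have hpos : ∀ m, 0 < u m := fun m => by
    have h1 := Real.Gamma_pos_of_pos (show (0:ℝ) < α*(m+1) by positivity)
    have h2 := Real.exp_pos (α*(m+1)+1)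
    rw [hu]
    positivity
  have hS : Tendsto (fun m : ℕ => α*((m:ℝ)+1)) atTop atTop := by
    apply Tendsto.const_mul_atTop hα0
    exact tendsto_atTop_add_const_right _ 1 tendsto_natCast_atTop_atTop
  have hA : Tendsto (fun m : ℕ => α*((m:ℝ)+1)+α) atTop atTop :=
    tendsto_atTop_add_const_right _ α hS
  have h1 : Tendsto (fun m : ℕ => (α*((m:ℝ)+1)+α)^(-α)) atTop (𝓝 0) :=
    (tendsto_rpow_neg_atTop hα0).comp hA
  have h2 : Tendsto (fun m : ℕ => (α*((m:ℝ)+1)+α)/(α*((m:ℝ)+1))) atTop (𝓝 1) := by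
    have hq : Tendsto (fun m : ℕ => α/(α*((m:ℝ)+1))) atTop (𝓝 0) :=
      tendsto_const_nhds.div_atTop hS
    have := hq.const_add 1
    rw [add_zero] at this
    refine this.congr' (Eventually.of_forall fun m => ?_)
    have hsm : (0:ℝ) < α*((m:ℝ)+1) := by positivity
    field_simp
  have hb0 : Tendsto (fun m : ℕ => (α*((m:ℝ)+1)+α)^((1:ℝ)-α)/(α*((m:ℝ)+1))) atTop (𝓝 0) := by
    have hprod := h1.mul h2
    rw [zero_mul] at hprod
    refine hprod.congr' (Eventually.of_forall fun m => ?_)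
    have hsm : (0:ℝ) < α*((m:ℝ)+1) := by positivity
    have hsma : (0:ℝ) < α*((m:ℝ)+1)+α := by positivity
    have key : (α*((m:ℝ)+1)+α)^((1:ℝ)-α) = (α*((m:ℝ)+1)+α) * (α*((m:ℝ)+1)+α)^(-α) := by
      rw [show (1:ℝ)-α = 1 + (-α) by ring, Real.rpow_add hsma, Real.rpow_one]
    show (α*((m:ℝ)+1)+α)^(-α) * ((α*((m:ℝ)+1)+α)/(α*((m:ℝ)+1)))
        = (α*((m:ℝ)+1)+α)^((1:ℝ)-α)/(α*((m:ℝ)+1))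
    rw [key]
    field_simp
  have hbx : Tendsto (fun m : ℕ => x * Real.exp α * ((α*((m:ℝ)+1)+α)^((1:ℝ)-α)/(α*((m:ℝ)+1))))
      atTop (𝓝 0) := by
    have := hb0.const_mul (x * Real.exp α)
    rwa [mul_zero] at this
  refine summable_of_ratio_test_tendsto_lt_one one_pos
    (Eventually.of_forall fun m => (hpos m).ne') ?_
  refine tendsto_of_tendsto_of_tendsto_of_le_of_le tendsto_const_nhds hbx
    (fun m => by positivity) (fun m => ?_)
  -- the ratio bound
  set s : ℝ := α*((m:ℝ)+1) with hs_def
  have hs : 0 < s := by positivity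
  have hΓs := Real.Gamma_pos_of_pos hs
  have hsa : (0:ℝ) < s + α := by linarith
  have hΓsa := Real.Gamma_pos_of_pos hsa
  have hs' : α*(((m+1:ℕ):ℝ)+1) = s + α := by push_cast; ring
  have hval : u (m+1) / u m = x * Real.exp α * (Real.Gamma s / Real.Gamma (s+α)) := by
    rw [hu]
    simp only
    rw [hs']
    have hexp : Real.exp ((s+α)+1) = Real.exp (s+1) * Real.exp α := by
      rw [← Real.exp_add]; ring_nf
    rw [hexp]
    have he1 := (Real.exp_pos (s+1)).ne'
    have he2 := (Real.exp_pos α).ne'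
    field_simp
    ring
  have hΓratio : Real.Gamma s / Real.Gamma (s+α) ≤ (s+α)^((1:ℝ)-α) / s := by
    have h := Gamma_ratio_lower hα0 hα1 hs
    rw [div_le_div_iff₀ hΓsa hs]
    nlinarith
  rw [Real.norm_eq_abs, Real.norm_eq_abs, abs_of_pos (hpos (m+1)), abs_of_pos (hpos m), hval]
  apply mul_le_mul_of_nonneg_left hΓratio
  positivity

lemma w_nonneg {α : ℝ} (hα0 : 0 < α) (hα1 : α ≤ 1) (n m : ℕ) : 0 ≤ w α n m := by
  rw [w, b]
  have h1 : (0:ℝ) ≤ (n:ℝ)^((1:ℝ) - α*(m+1)) := Real.rpow_nonneg (Nat.cast_nonneg n) _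
  have h2 : (0:ℝ) ≤ P (α*(m+1)) n := by
    unfold P
    exact Finset.prod_nonneg fun i _ => by positivity
  positivity

theorem main_limit {α x : ℝ} (hα0 : 0 < α) (hα1 : α ≤ 1) (hx : 0 < x) :
    Tendsto (fun n : ℕ => ∑' m : ℕ, (-x)^m * w α n m) atTop
      (𝓝 (∑' m : ℕ, (-x)^m * (1 / Real.Gamma (α*(m+1))))) ∧
    ∀ᶠ n : ℕ in atTop, 0 ≤ ∑' m : ℕ, (-x)^m * w α n m := by
  -- choose N
  have h1 : Tendsto (fun n : ℕ => (n:ℝ)^(α/4)) atTop atTop :=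
    (tendsto_rpow_atTop (by positivity)).comp tendsto_natCast_atTop_atTop
  have h2 := h1.eventually_ge_atTop (x+1)
  have h3 : ∀ᶠ n : ℕ in atTop, 55 ≤ n := eventually_ge_atTop 55
  obtain ⟨N, hN⟩ := eventually_atTop.mp (h3.and h2)
  obtain ⟨hN55, hNx⟩ := hN N le_rfl
  have hN0 : (0:ℝ) < N := by
    have : (0:ℕ) < N := by omega
    exact_mod_cast this
  set r : ℝ := (N:ℝ)^(-(α/4:ℝ)) with hr_def
  have hr_pos : 0 < r := Real.rpow_pos_of_pos hN0 _
  have hNq : (0:ℝ) < (N:ℝ)^(α/4:ℝ) := Real.rpow_pos_of_pos hN0 _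
  have hr_eq : r = ((N:ℝ)^(α/4:ℝ))⁻¹ := by
    rw [hr_def, Real.rpow_neg hN0.le]
  have hxr : x * r < 1 := by
    rw [hr_eq, mul_inv_lt_iff₀ hNq, one_mul]
    calc x < x + 1 := by linarith
      _ ≤ (N:ℝ)^(α/4:ℝ) := hNx
  -- envelope
  set D : ℕ → ℝ := fun m => x^m * (Real.exp (α*(m+1)+1) / Real.Gamma (α*(m+1))) + x^m * r^(m+1)
    with hD_def
  have hD_summable : Summable D := by
    refine Summable.add (env1_summable hα0 hα1 hx) ?_
    have hgeo : Summable (fun m : ℕ => r * (x*r)^m) :=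
      (summable_geometric_of_lt_one (by positivity) hxr).mul_left r
    refine hgeo.congr fun m => ?_
    rw [mul_pow, pow_succ]
    ring
  have h_lim : ∀ m : ℕ, Tendsto (fun n : ℕ => (-x)^m * w α n m) atTop
      (𝓝 ((-x)^m * (1 / Real.Gamma (α*(m+1))))) :=
    fun m => (w_tendsto hα0 m).const_mul _
  have h_bound : ∀ᶠ n : ℕ in atTop, ∀ m : ℕ, ‖(-x)^m * w α n m‖ ≤ D m := by
    filter_upwards [eventually_ge_atTop N] with n hn m
    obtain ⟨h55, hx1⟩ := hN n hn
    have hw := w_nonneg hα0 hα1 n m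
    have hnorm : ‖(-x)^m * w α n m‖ = x^m * w α n m := by
      rw [Real.norm_eq_abs, abs_mul, abs_pow, abs_neg, abs_of_pos hx, abs_of_nonneg hw]
    rw [hnorm]
    have hterm2 : (0:ℝ) ≤ x^m * r^(m+1) := by positivity
    have hterm1 : (0:ℝ) ≤ x^m * (Real.exp (α*(m+1)+1) / Real.Gamma (α*(m+1))) := by
      have := Real.Gamma_pos_of_pos (show (0:ℝ) < α*(m+1) by positivity)
      positivity
    by_cases hcase : α*((m:ℝ)+1) ≤ (n:ℝ)
    · have hA := regimeA hα0 (by omega) hcase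
      have : x^m * w α n m ≤ x^m * (Real.exp (α*(m+1)+1) / Real.Gamma (α*(m+1))) :=
        mul_le_mul_of_nonneg_left hA (by positivity)
      rw [hD_def]
      simp only
      linarith
    · push_neg at hcase
      have hB := regimeB hα0 h55 hcase.le
      have hs : (0:ℝ) < α*((m:ℝ)+1) := by positivity
      have hlogN : Real.log N ≤ Real.log n := by
        have hNn : (N:ℝ) ≤ (n:ℝ) := by exact_mod_cast hn
        exact Real.log_le_log hN0 hNn
      have hstep1 : Real.exp (-(α*((m:ℝ)+1)) * Real.log n / 4)
          ≤ Real.exp (-(α*((m:ℝ)+1)) * Real.log N / 4) := by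
        apply Real.exp_le_exp.mpr
        have h := mul_le_mul_of_nonneg_left hlogN hs.le
        nlinarith
      have hstep2 : Real.exp (-(α*((m:ℝ)+1)) * Real.log N / 4) = r^(m+1) := by
        have : r^(m+1) = (N:ℝ)^((-(α/4:ℝ)) * ((m:ℝ)+1)) := by
          rw [hr_def, ← Real.rpow_natCast ((N:ℝ)^(-(α/4:ℝ))) (m+1), ← Real.rpow_mul hN0.le]
          push_cast
          ring_nf
        rw [this, Real.rpow_def_of_pos hN0]
        congr 1
        ring
      have hwr : w α n m ≤ r^(m+1) := by
        rw [← hstep2]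
        exact hB.trans (hstep1)
      have : x^m * w α n m ≤ x^m * r^(m+1) :=
        mul_le_mul_of_nonneg_left hwr (by positivity)
      rw [hD_def]
      simp only
      linarith
  constructor
  · exact tendsto_tsum_of_dominated_convergence hD_summable h_lim h_bound
  · filter_upwards [eventually_ge_atTop N] with n hn
    obtain ⟨h55, hx1⟩ := hN n hn
    have hn0 : (0:ℝ) < n := by
      have : (0:ℕ) < n := by omega
      exact_mod_cast this
    set c : ℝ := x * (n:ℝ)^(-α:ℝ) with hc_def
    have hc0 : 0 ≤ c := by
      have := Real.rpow_pos_of_pos hn0 (-α:ℝ)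
      positivity
    have hnα : (0:ℝ) < (n:ℝ)^(α:ℝ) := Real.rpow_pos_of_pos hn0 _
    have hc1 : c < 1 := by
      rw [hc_def, Real.rpow_neg hn0.le, mul_inv_lt_iff₀ hnα, one_mul]
      have hq : (1:ℝ) ≤ (n:ℝ)^(α/4:ℝ) := le_trans (by linarith) hx1
      have h4 : (n:ℝ)^(α:ℝ) = ((n:ℝ)^(α/4:ℝ))^(4:ℕ) := by
        rw [← Real.rpow_natCast ((n:ℝ)^(α/4:ℝ)) 4, ← Real.rpow_mul hn0.le]
        norm_num
      have : (n:ℝ)^(α/4:ℝ) ≤ ((n:ℝ)^(α/4:ℝ))^(4:ℕ) :=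
        le_self_pow₀ hq (by norm_num)
      calc x < x + 1 := by linarith
        _ ≤ (n:ℝ)^(α/4:ℝ) := hx1
        _ ≤ ((n:ℝ)^(α/4:ℝ))^(4:ℕ) := this
        _ = (n:ℝ)^(α:ℝ) := h4.symm
    have hqe : ∀ m : ℕ, (-x)^m * w α n m = (n:ℝ)^((1:ℝ)-α) * ((-c)^m * b α n m) := by
      intro m
      rw [w]
      have hsplit : (n:ℝ)^((1:ℝ) - α*((m:ℝ)+1)) = (n:ℝ)^((1:ℝ)-α) * ((n:ℝ)^(-α:ℝ))^m := by
        rw [← Real.rpow_natCast ((n:ℝ)^(-α:ℝ)) m, ← Real.rpow_mul hn0.le,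
          ← Real.rpow_add hn0]
        congr 1
        ring
      rw [hsplit]
      have : (-c)^m = (-x)^m * ((n:ℝ)^(-α:ℝ))^m := by
        rw [← mul_pow]
        congr 1
        rw [hc_def]
        ring
      rw [this]
      ring
    rw [tsum_congr hqe, tsum_mul_left]
    have hT := T_nonneg hα0 hα1 hc0 hc1 n
    have := Real.rpow_nonneg hn0.le ((1:ℝ)-α)
    exact mul_nonneg this hT


end MLpf

end

open Real

theorem mittagLeffler_alpha_alpha_nonneg (α x : ℝ) (hα0 : 0 < α) (hα1 : α ≤ 1)
    (hx : 0 ≤ x) : 0 ≤ mittagLeffler α α (-x) := by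
  rcases hx.eq_or_lt with heq | hxpos
  · -- the case x = 0
    rw [← heq, neg_zero]
    have hval : mittagLeffler α α 0 = 1 / Real.Gamma α := by
      rw [mittagLeffler]
      rw [tsum_eq_single 0 ?_]
      · norm_num
      · intro k hk
        rw [zero_pow hk, zero_div]
    rw [hval]
    exact (div_nonneg zero_le_one (Real.Gamma_pos_of_pos hα0).le)
  · obtain ⟨hlim, hpos⟩ := MLpf.main_limit hα0 hα1 hxpos
    have h0 : 0 ≤ ∑' m : ℕ, (-x)^m * (1 / Real.Gamma (α*(m+1))) := ge_of_tendsto hlim hpos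
    have heq2 : mittagLeffler α α (-x) = ∑' m : ℕ, (-x)^m * (1 / Real.Gamma (α*(m+1))) := by
      rw [mittagLeffler]
      exact tsum_congr fun k => by
        rw [show (k:ℝ)*α+α = α*((k:ℝ)+1) by ring, div_eq_mul_one_div]
    rw [heq2]
    exact h0
end

section
/- For 0 < α ≤ 1 and every λ > 0, the function x ↦ x^{α-1} E_{α,α}(-λ x^α) is monotonically decreasing on (0, ∞): for all 0 < x ≤ y one has y^{α-1} E_{α,α}(-λ y^α) ≤ x^{α-1} E_{α,α}(-λ x^α). -/
open Real

open Filter Finset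

namespace MLaux

/-- coefficients in the closed form for derivatives of `v ↦ 1/(v^α+λ)` -/
noncomputable def acoef (α : ℝ) : ℕ → ℕ → ℝ
  | 0, j => if j = 0 then 1 else 0
  | n+1, j => ((n : ℝ) - j * α) * acoef α n j + j * α * acoef α n (j-1)

lemma acoef_zero_of_gt (α : ℝ) : ∀ n j : ℕ, n < j → acoef α n j = 0 := by
  intro n
  induction n with
  | zero => intro j hj; simp [acoef]; omega
  | succ n ih =>
      intro j hj
      have h1 : acoef α n j = 0 := ih j (by omega)
      have h2 : acoef α n (j-1) = 0 := ih (j-1) (by omega)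
      simp [acoef, h1, h2]

lemma acoef_nonneg {α : ℝ} (hα0 : 0 ≤ α) (hα1 : α ≤ 1) : ∀ n j : ℕ, 0 ≤ acoef α n j := by
  intro n
  induction n with
  | zero => intro j; unfold acoef; split <;> norm_num
  | succ n ih =>
      intro j
      show 0 ≤ ((n : ℝ) - j * α) * acoef α n j + j * α * acoef α n (j-1)
      rcases le_or_gt j n with hj | hj
      · have h1 : (0:ℝ) ≤ (n : ℝ) - j * α := by
          have : (j:ℝ) * α ≤ n := by
            calc (j:ℝ) * α ≤ (j:ℝ) * 1 := by
                  exact mul_le_mul_of_nonneg_left hα1 (by positivity)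
            _ = (j:ℝ) := by ring
            _ ≤ (n:ℝ) := by exact_mod_cast hj
          linarith
        have := ih j; have := ih (j-1)
        positivity
      · have h1 : acoef α n j = 0 := acoef_zero_of_gt α n j hj
        rw [h1, mul_zero, zero_add]
        have := ih (j-1)
        positivity

section tj

variable {α lam : ℝ}

/-- the building blocks `u^j/(u+λ)^(j+1)`, `u = v^α` -/
noncomputable def tj (α lam : ℝ) (j : ℕ) (v : ℝ) : ℝ := (v^α)^j / (v^α + lam)^(j+1)

variable (hα0 : 0 < α) (hlam : 0 < lam)

lemma tj_pos (j : ℕ) {v : ℝ} (hv : 0 < v) (hlam : 0 < lam) : 0 < tj α lam j v := by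
  have hu : 0 < v^α := rpow_pos_of_pos hv α
  have hd : 0 < v^α + lam := by linarith
  exact div_pos (pow_pos hu j) (pow_pos hd (j+1))

lemma tj_succ_le (j : ℕ) {v : ℝ} (hv : 0 < v) (hlam : 0 < lam) :
    tj α lam (j+1) v ≤ tj α lam j v := by
  have hu : 0 < v^α := rpow_pos_of_pos hv α
  have hd : 0 < v^α + lam := by linarith
  have heq : tj α lam (j+1) v = tj α lam j v * (v^α / (v^α + lam)) := by
    unfold tj
    rw [pow_succ, pow_succ (v^α + lam)]
    field_simp
  rw [heq]
  have h1 : v^α / (v^α + lam) ≤ 1 := by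
    rw [div_le_one hd]; linarith
  nlinarith [tj_pos (α := α) (lam := lam) j hv hlam, div_pos hu hd]

lemma hasDerivAt_tj (j : ℕ) {v : ℝ} (hv : 0 < v) (hlam : 0 < lam) :
    HasDerivAt (tj α lam j)
      (α / v * (j * tj α lam j v - (j+1) * tj α lam (j+1) v)) v := by
  have hu : 0 < v^α := rpow_pos_of_pos hv α
  have hd : 0 < v^α + lam := by linarith
  have hder : HasDerivAt (fun v : ℝ => v^α) (α * v^(α-1)) v := by
    simpa [mul_comm] using Real.hasDerivAt_rpow_const (p := α) (Or.inl hv.ne')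
  have hnum : HasDerivAt (fun v : ℝ => (v^α)^j)
      ((j : ℝ) * (v^α)^(j-1) * (α * v^(α-1))) v := hder.pow j
  have hden : HasDerivAt (fun v : ℝ => (v^α + lam)^(j+1))
      (((j:ℕ)+1 : ℕ) * (v^α + lam)^j * (α * v^(α-1))) v := by
    simpa using (hder.add_const lam).fun_pow (j+1)
  have hdiv := hnum.div hden (by positivity)
  convert hdiv using 1
  · rfl
  · rfl
  · rfl
  have hvne : v ≠ 0 := hv.ne'
  have hpow : v^(α-1) = v^α / v := Real.rpow_sub_one hvne α
  unfold tj
  rw [hpow]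
  cases j with
  | zero => push_cast; field_simp; ring
  | succ m =>
      push_cast
      field_simp
      ring

end tj

section S

variable {α lam : ℝ}

noncomputable def Sf (α lam : ℝ) (n : ℕ) (v : ℝ) : ℝ :=
  ∑ j ∈ range (n+1), acoef α n j * tj α lam j v

lemma Sf_nonneg {n : ℕ} {v : ℝ} (hα0 : 0 ≤ α) (hα1 : α ≤ 1) (hv : 0 < v) (hlam : 0 < lam) :
    0 ≤ Sf α lam n v := by
  apply Finset.sum_nonneg
  intro j _
  exact mul_nonneg (acoef_nonneg hα0 hα1 n j) (tj_pos j hv hlam).le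

lemma hasDerivAt_Sf {n : ℕ} {v : ℝ} (hv : 0 < v) (hlam : 0 < lam) :
    HasDerivAt (Sf α lam n)
      (∑ j ∈ range (n+1), acoef α n j *
        (α / v * (j * tj α lam j v - (j+1) * tj α lam (j+1) v))) v := by
  apply HasDerivAt.fun_sum
  intro j _
  exact (hasDerivAt_tj j hv hlam).const_mul _

/-- the key recurrence, rewritten as an identity of sums -/
lemma Sf_succ_eq {n : ℕ} {v : ℝ} :
    Sf α lam (n+1) v = (n : ℝ) * Sf α lam n v
      - ∑ j ∈ range (n+1), acoef α n j *
          (α * (j * tj α lam j v - (j+1) * tj α lam (j+1) v)) := by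
  have expand : Sf α lam (n+1) v
      = ∑ j ∈ range (n+2), (((n:ℝ) - j * α) * acoef α n j) * tj α lam j v
        + ∑ j ∈ range (n+2), (j * α * acoef α n (j-1)) * tj α lam j v := by
    unfold Sf
    rw [← Finset.sum_add_distrib]
    apply Finset.sum_congr rfl
    intro j _
    show acoef α (n+1) j * tj α lam j v = _
    rw [show acoef α (n+1) j = ((n : ℝ) - j * α) * acoef α n j + j * α * acoef α n (j-1) from rfl]
    ring
  rw [expand]
  -- first sum: the top term vanishes
  rw [Finset.sum_range_succ (f := fun j => (((n:ℝ) - j * α) * acoef α n j) * tj α lam j v)]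
  rw [acoef_zero_of_gt α n (n+1) (by omega)]
  -- second sum: shift the index
  rw [Finset.sum_range_succ' (f := fun j => ((j:ℝ) * α * acoef α n (j-1)) * tj α lam j v)]
  simp only [Nat.cast_zero, zero_mul, mul_zero, zero_add, add_zero, Nat.cast_add, Nat.cast_one,
    Nat.add_sub_cancel]
  unfold Sf
  rw [Finset.mul_sum, ← Finset.sum_sub_distrib]
  rw [← Finset.sum_add_distrib]
  apply Finset.sum_congr rfl
  intro j _
  ring

end S


section Q

variable {α lam : ℝ}

noncomputable def Qf (α lam : ℝ) (n : ℕ) (v : ℝ) : ℝ := v * Sf α lam n v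

lemma hasDerivAt_Qf {n : ℕ} {v : ℝ} (hv : 0 < v) (hlam : 0 < lam) :
    HasDerivAt (Qf α lam n)
      (∑ j ∈ range (n+1), acoef α n j *
        (tj α lam j v + α * (j * tj α lam j v - (j+1) * tj α lam (j+1) v))) v := by
  have h := (hasDerivAt_id v).mul (hasDerivAt_Sf (α := α) (lam := lam) (n := n) hv hlam)
  convert h using 1
  · rfl
  · rfl
  · rfl
  rw [id_eq, Finset.mul_sum, one_mul]
  unfold Sf
  rw [← Finset.sum_add_distrib]
  apply Finset.sum_congr rfl
  intro j _
  field_simp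

lemma Qf_deriv_nonneg {n : ℕ} {v : ℝ} (hα0 : 0 < α) (hα1 : α ≤ 1) (hv : 0 < v)
    (hlam : 0 < lam) :
    0 ≤ ∑ j ∈ range (n+1), acoef α n j *
        (tj α lam j v + α * (j * tj α lam j v - (j+1) * tj α lam (j+1) v)) := by
  apply Finset.sum_nonneg
  intro j _
  apply mul_nonneg (acoef_nonneg hα0.le hα1 n j)
  have h1 : tj α lam (j+1) v ≤ tj α lam j v := tj_succ_le j hv hlam
  have h2 : 0 < tj α lam j v := tj_pos j hv hlam
  nlinarith [mul_le_mul_of_nonneg_left h1 (by positivity : (0:ℝ) ≤ α * (j+1))]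

lemma Qf_monotoneOn {n : ℕ} (hα0 : 0 < α) (hα1 : α ≤ 1) (hlam : 0 < lam) :
    MonotoneOn (Qf α lam n) (Set.Ioi 0) := by
  have hint : interior (Set.Ioi (0:ℝ)) = Set.Ioi 0 := interior_Ioi
  apply monotoneOn_of_deriv_nonneg (convex_Ioi 0)
  · intro x hx
    exact (hasDerivAt_Qf hx hlam).continuousAt.continuousWithinAt
  · rw [hint]
    intro x hx
    exact (hasDerivAt_Qf hx hlam).differentiableAt.differentiableWithinAt
  · rw [hint]
    intro x hx
    rw [(hasDerivAt_Qf hx hlam).deriv]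
    exact Qf_deriv_nonneg hα0 hα1 hx hlam

end Q

section W

variable {α lam : ℝ}

/-- `β k = (k+1)α` -/
noncomputable def bet (α : ℝ) (k : ℕ) : ℝ := ((k:ℝ)+1)*α

lemma bet_pos (hα0 : 0 < α) (k : ℕ) : 0 < bet α k := by
  unfold bet; positivity

/-- terms of the series for the `n`-th derivative (up to sign) of `v ↦ 1/(v^α+λ)` -/
noncomputable def gterm (α lam : ℝ) (n k : ℕ) (v : ℝ) : ℝ :=
  (-lam)^k * (∏ i ∈ range n, (bet α k + i)) * v ^ (-(bet α k) - n)

noncomputable def Wf (α lam : ℝ) (n : ℕ) (v : ℝ) : ℝ := ∑' k : ℕ, gterm α lam n k v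

lemma prod_bet_nonneg (hα0 : 0 < α) (n k : ℕ) : 0 ≤ ∏ i ∈ range n, (bet α k + i) := by
  apply Finset.prod_nonneg
  intro i _
  have := bet_pos hα0 k
  positivity

lemma prod_bet_le (hα0 : 0 < α) (hα1 : α ≤ 1) (n k : ℕ) :
    ∏ i ∈ range n, (bet α k + i) ≤ ((1+(n:ℝ))^n) * ((k:ℝ)+1)^n := by
  calc ∏ i ∈ range n, (bet α k + i)
      ≤ ∏ _i ∈ range n, ((1+(n:ℝ)) * ((k:ℝ)+1)) := ?_
    _ = ((1+(n:ℝ))^n) * ((k:ℝ)+1)^n := by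
        rw [Finset.prod_const, Finset.card_range, mul_pow]
  apply Finset.prod_le_prod
  · intro i _
    have h := bet_pos hα0 k
    have h2 : (0:ℝ) ≤ i := Nat.cast_nonneg i
    linarith
  intro i hi
  have hik : (i:ℝ) ≤ n - 1 := by
    have : i < n := Finset.mem_range.mp hi
    have : (i:ℝ) + 1 ≤ n := by exact_mod_cast this
    linarith
  have hb : bet α k ≤ (k:ℝ)+1 := by
    unfold bet
    nlinarith [Nat.cast_nonneg (α := ℝ) k]
  have hk1 : (1:ℝ) ≤ (k:ℝ)+1 := by linarith [Nat.cast_nonneg (α := ℝ) k]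
  unfold bet
  nlinarith [Nat.cast_nonneg (α := ℝ) k, Nat.cast_nonneg (α := ℝ) n]

lemma summable_main (hα0 : 0 < α) (hα1 : α ≤ 1) (n : ℕ) {r : ℝ} (hr0 : 0 < r) (hr : r < 1) :
    Summable (fun k : ℕ => (∏ i ∈ range n, (bet α k + i)) * r^k) := by
  have base : Summable (fun k : ℕ => ((k:ℝ))^n * r^k) :=
    summable_pow_mul_geometric_of_norm_lt_one n (by rwa [Real.norm_eq_abs, abs_of_pos hr0])
  have s1 : Summable (fun k : ℕ => (((k:ℝ)+1))^n * r^(k+1)) := by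
    have := (summable_nat_add_iff (f := fun k : ℕ => ((k:ℝ))^n * r^k) 1).mpr base
    simpa using this
  have s2 : Summable (fun k : ℕ => (((k:ℝ)+1))^n * r^k) := by
    have := s1.mul_left r⁻¹
    apply this.congr
    intro k
    rw [pow_succ]
    field_simp
  apply Summable.of_nonneg_of_le (fun k => ?_) (fun k => ?_) (s2.mul_left ((1+(n:ℝ))^n))
  · have := prod_bet_nonneg hα0 n k
    positivity
  · have h1 := prod_bet_le hα0 hα1 n k
    have h2 : (0:ℝ) ≤ r^k := by positivity
    calc (∏ i ∈ range n, (bet α k + i)) * r^k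
        ≤ (((1+(n:ℝ))^n) * ((k:ℝ)+1)^n) * r^k := by
          exact mul_le_mul_of_nonneg_right h1 h2
      _ = (1+(n:ℝ))^n * (((k:ℝ)+1)^n * r^k) := by ring

lemma gterm_bound (hα0 : 0 < α) (hlam : 0 < lam) (n k : ℕ) {c y : ℝ} (hc : 0 < c)
    (hy : c ≤ y) :
    |gterm α lam n k y| ≤ (∏ i ∈ range n, (bet α k + i)) * (c ^ (-α - n) * (lam * (c^α)⁻¹)^k) := by
  have hy0 : 0 < y := lt_of_lt_of_le hc hy
  have h1 : |gterm α lam n k y| = lam^k * (∏ i ∈ range n, (bet α k + i)) * y ^ (-(bet α k) - n) := by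
    unfold gterm
    rw [abs_mul, abs_mul, abs_pow, abs_neg, abs_of_pos hlam,
      abs_of_nonneg (prod_bet_nonneg hα0 n k), abs_of_pos (Real.rpow_pos_of_pos hy0 _)]
  rw [h1]
  have h2 : y ^ (-(bet α k) - n) ≤ c ^ (-(bet α k) - n) := by
    apply Real.rpow_le_rpow_of_nonpos hc hy
    have := bet_pos hα0 k
    have : (0:ℝ) ≤ n := Nat.cast_nonneg n
    linarith [bet_pos hα0 k]
  have h3 : c ^ (-(bet α k) - n) = c ^ (-α - n) * ((c^α)⁻¹)^k := by
    have e2 : c ^ ((-α) * (k:ℝ)) = ((c^α)⁻¹)^k := by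
      rw [Real.rpow_mul hc.le, Real.rpow_natCast, Real.rpow_neg hc.le]
    rw [← e2, ← Real.rpow_add hc]
    congr 1
    unfold bet
    ring
  calc lam^k * (∏ i ∈ range n, (bet α k + i)) * y ^ (-(bet α k) - n)
      ≤ lam^k * (∏ i ∈ range n, (bet α k + i)) * c ^ (-(bet α k) - n) := by
        apply mul_le_mul_of_nonneg_left h2
        have := prod_bet_nonneg hα0 n k
        positivity
    _ = (∏ i ∈ range n, (bet α k + i)) * (c ^ (-α - n) * (lam * (c^α)⁻¹)^k) := by
        rw [h3, mul_pow]
        ring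

lemma summable_gterm_bound (hα0 : 0 < α) (hα1 : α ≤ 1) (hlam : 0 < lam) (n : ℕ) {c : ℝ}
    (hc : 0 < c) (hck : lam < c^α) :
    Summable (fun k : ℕ =>
      (∏ i ∈ range n, (bet α k + i)) * (c ^ (-α - n) * (lam * (c^α)⁻¹)^k)) := by
  have hca : 0 < c^α := Real.rpow_pos_of_pos hc α
  have hr0 : 0 < lam * (c^α)⁻¹ := by positivity
  have hr1 : lam * (c^α)⁻¹ < 1 := by
    rw [mul_inv_lt_iff₀ hca, one_mul]; exact hck
  have := (summable_main hα0 hα1 n hr0 hr1).mul_left (c ^ (-α - n))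
  apply this.congr
  intro k
  ring

lemma summable_gterm (hα0 : 0 < α) (hα1 : α ≤ 1) (hlam : 0 < lam) (n : ℕ) {c y : ℝ}
    (hc : 0 < c) (hck : lam < c^α) (hy : c ≤ y) :
    Summable (fun k : ℕ => gterm α lam n k y) := by
  apply Summable.of_norm_bounded (summable_gterm_bound hα0 hα1 hlam n hc hck)
  intro k
  exact gterm_bound hα0 hlam n k hc hy

end W

section Wident

variable {α lam : ℝ}

lemma hasDerivAt_gterm (hα0 : 0 < α) (n k : ℕ) {v : ℝ} (hv : 0 < v) :
    HasDerivAt (gterm α lam n k) (-(gterm α lam (n+1) k v)) v := by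
  have h : HasDerivAt (fun v : ℝ => v ^ (-(bet α k) - n))
      ((-(bet α k) - n) * v ^ ((-(bet α k) - n) - 1)) v :=
    Real.hasDerivAt_rpow_const (Or.inl hv.ne')
  have h2 := h.const_mul ((-lam)^k * (∏ i ∈ range n, (bet α k + i)))
  convert h2 using 1
  · rfl
  · rfl
  · rfl
  unfold gterm
  rw [Finset.prod_range_succ]
  have he : (-(bet α k) - ((n:ℕ)+1 : ℕ)) = (-(bet α k) - n) - 1 := by push_cast; ring
  rw [he]
  ring

lemma Sf_div_eq_Wf (hα0 : 0 < α) (hα1 : α ≤ 1) (hlam : 0 < lam) {c : ℝ} (hc : 0 < c)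
    (hck : lam < c^α) :
    ∀ n : ℕ, ∀ v : ℝ, v ∈ Set.Ioi c → Sf α lam n v / v^n = Wf α lam n v := by
  intro n
  induction n with
  | zero =>
      intro v hv
      have hvc : c < v := hv
      have hv0 : 0 < v := hc.trans hvc
      have hu : 0 < v^α := rpow_pos_of_pos hv0 α
      have hlamu : lam < v^α :=
        hck.trans_le (Real.rpow_le_rpow hc.le hvc.le hα0.le)
      have hS : Sf α lam 0 v = (v^α + lam)⁻¹ := by
        unfold Sf acoef tj
        simp
      have hnorm : ‖-lam * (v^α)⁻¹‖ < 1 := by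
        rw [norm_mul, norm_neg, Real.norm_eq_abs, Real.norm_eq_abs, abs_of_pos hlam,
          abs_of_pos (inv_pos.mpr hu), mul_inv_lt_iff₀ hu, one_mul]
        exact hlamu
      have hgeo := tsum_geometric_of_norm_lt_one hnorm
      have hterm : ∀ k : ℕ, gterm α lam 0 k v = (v^α)⁻¹ * (-lam * (v^α)⁻¹)^k := by
        intro k
        unfold gterm
        rw [Finset.prod_range_zero]
        have e : v ^ (-(bet α k) - ((0:ℕ):ℝ)) = ((v^α)⁻¹)^(k+1) := by
          rw [show (-(bet α k) - ((0:ℕ):ℝ)) = (-α) * (((k+1 : ℕ)):ℝ) by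
            unfold bet; push_cast; ring]
          rw [Real.rpow_mul hv0.le, Real.rpow_natCast, Real.rpow_neg hv0.le]
        rw [e, mul_pow, pow_succ]
        ring
      have hW : Wf α lam 0 v = (v^α)⁻¹ * (1 - (-lam * (v^α)⁻¹))⁻¹ := by
        unfold Wf
        rw [← hgeo, ← tsum_mul_left]
        exact tsum_congr hterm
      rw [pow_zero, div_one, hS, hW]
      rw [show (1 - -lam * (v ^ α)⁻¹) = (v^α + lam) * (v^α)⁻¹ by field_simp; ring]
      rw [mul_inv, inv_inv]
      rw [show (v^α)⁻¹ * ((v^α + lam)⁻¹ * v^α) = ((v^α)⁻¹ * v^α) * (v^α + lam)⁻¹ by ring]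
      rw [inv_mul_cancel₀ hu.ne', one_mul]
  | succ n ih =>
      intro v hv
      have hvc : c < v := hv
      have hv0 : 0 < v := hc.trans hvc
      -- derivative of the closed form
      have hSder := hasDerivAt_Sf (α := α) (lam := lam) (n := n) hv0 hlam
      have hpow : HasDerivAt (fun z : ℝ => z^n) ((n:ℝ) * v^(n-1)) v := hasDerivAt_pow n v
      have hvn : (v:ℝ)^n ≠ 0 := pow_ne_zero n hv0.ne'
      have hdiv := hSder.div hpow hvn
      have hsum2 : ∑ j ∈ range (n+1), acoef α n j *
            (α / v * (j * tj α lam j v - (j+1) * tj α lam (j+1) v))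
          = ((n:ℝ) * Sf α lam n v - Sf α lam (n+1) v) / v := by
        have h1 := Sf_succ_eq (α := α) (lam := lam) (n := n) (v := v)
        have h2 : ∑ j ∈ range (n+1), acoef α n j *
            (α / v * (j * tj α lam j v - (j+1) * tj α lam (j+1) v))
            = (∑ j ∈ range (n+1), acoef α n j *
              (α * (j * tj α lam j v - (j+1) * tj α lam (j+1) v))) / v := by
          rw [Finset.sum_div]
          apply Finset.sum_congr rfl
          intro j _
          field_simp
        rw [h2]
        congr 1
        linarith
      rw [hsum2] at hdiv
      have hval : (((n:ℝ) * Sf α lam n v - Sf α lam (n+1) v) / v * v^n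
            - Sf α lam n v * ((n:ℝ) * v^(n-1))) / (v^n)^2
          = -(Sf α lam (n+1) v / v^(n+1)) := by
        cases n with
        | zero => simp; field_simp
        | succ m =>
            have hm : (m:ℕ)+1-1 = m := rfl
            rw [hm]
            field_simp
            ring
      rw [hval] at hdiv
      -- derivative of the series form
      have hW : HasDerivAt (Wf α lam n) (∑' k, -(gterm α lam (n+1) k v)) v := by
        apply hasDerivAt_tsum_of_isPreconnected
          (summable_gterm_bound hα0 hα1 hlam (n+1) hc hck) isOpen_Ioi
          (convex_Ioi c).isPreconnected
          (fun k y hy => hasDerivAt_gterm hα0 n k (hc.trans hy))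
          (fun k y hy => ?_) hv
          (summable_gterm hα0 hα1 hlam n hc hck (le_of_lt hvc)) hv
        rw [norm_neg, Real.norm_eq_abs]
        exact gterm_bound hα0 hlam (n+1) k hc (le_of_lt hy)
      have htneg : (∑' k, -(gterm α lam (n+1) k v)) = -(Wf α lam (n+1) v) := by
        unfold Wf
        exact tsum_neg
      rw [htneg] at hW
      have hEq : (fun z => Sf α lam n z / z^n) =ᶠ[nhds v] (Wf α lam n) := by
        filter_upwards [isOpen_Ioi.mem_nhds hvc] with z hz
        exact ih z hz
      have hW' : HasDerivAt (fun z => Sf α lam n z / z^n) (-(Wf α lam (n+1) v)) v :=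
        hW.congr_of_eventuallyEq hEq
      have huni := hW'.unique hdiv
      exact (neg_injective huni).symm

end Wident

section Limit

variable {α lam : ℝ}

/-- the terms of `Q_n(n/x)/n!` as a series in `k` -/
noncomputable def Tnk (α lam x : ℝ) (n k : ℕ) : ℝ :=
  (-lam)^k * (∏ i ∈ range n, (bet α k + i)) * (((n:ℝ)/x) ^ (1 - bet α k)) / (n.factorial : ℝ)

/-- the limiting terms -/
noncomputable def gx (α lam x : ℝ) (k : ℕ) : ℝ :=
  (-lam)^k * x ^ (bet α k - 1) / Real.Gamma (bet α k)

/-- the absolute values, with the `x` dependence stripped -/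
noncomputable def AbsT (α lam : ℝ) (n k : ℕ) : ℝ :=
  lam^k * (∏ i ∈ range n, (bet α k + i)) * ((n:ℝ)) ^ (1 - bet α k) / (n.factorial : ℝ)

lemma rpow_one_sub_div {b x : ℝ} (hx : 0 < x) (n : ℕ) :
    (((n:ℝ))/x) ^ (1 - b) = ((n:ℝ)) ^ (1-b) * x ^ (b-1) := by
  rw [Real.div_rpow (Nat.cast_nonneg n) hx.le]
  rw [show b - 1 = -(1-b) by ring, Real.rpow_neg hx.le]
  rw [div_eq_mul_inv]

lemma abs_Tnk_eq {x : ℝ} (hα0 : 0 < α) (hlam : 0 < lam) (hx : 0 < x) {n : ℕ} (hn : 1 ≤ n)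
    (k : ℕ) :
    |Tnk α lam x n k| = AbsT α lam n k * x ^ (bet α k - 1) := by
  have hn0 : (0:ℝ) < n := by exact_mod_cast hn
  have hfac : (0:ℝ) < (n.factorial : ℝ) := by exact_mod_cast n.factorial_pos
  unfold Tnk AbsT
  rw [abs_div, abs_mul, abs_mul, abs_pow, abs_neg, abs_of_pos hlam,
    abs_of_nonneg (prod_bet_nonneg hα0 n k),
    abs_of_pos (Real.rpow_pos_of_pos (by positivity) _), abs_of_pos hfac,
    rpow_one_sub_div hx]
  ring

lemma ratio_step {b : ℝ} (hb : 1 ≤ b) {n : ℕ} (hn : 1 ≤ n) :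
    (b + n) * (((n:ℝ))+1) ^ (1 - b) ≤ (((n:ℝ))+1) * ((n:ℝ)) ^ (1 - b) := by
  have hn0 : (0:ℝ) < n := by exact_mod_cast hn
  have h1n : (0:ℝ) < (n:ℝ) + 1 := by linarith
  have hnb : (0:ℝ) < ((n:ℝ))^b := Real.rpow_pos_of_pos hn0 b
  have h1nb : (0:ℝ) < ((n:ℝ)+1)^b := Real.rpow_pos_of_pos h1n b
  have hber : 1 + b * (1/(n:ℝ)) ≤ (1 + 1/(n:ℝ)) ^ b := by
    apply one_add_mul_self_le_rpow_one_add _ hb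
    have : (0:ℝ) < 1/(n:ℝ) := by positivity
    linarith
  have hdiv : ((n:ℝ)+1)/(n:ℝ) = 1 + 1/(n:ℝ) := by field_simp
  have h2 : (((n:ℝ)+1)/(n:ℝ)) ^ b = ((n:ℝ)+1)^b / ((n:ℝ))^b :=
    Real.div_rpow h1n.le (Nat.cast_nonneg n) b
  have key : (1 + b * (1/(n:ℝ))) * ((n:ℝ))^b ≤ ((n:ℝ)+1)^b := by
    have h3 : 1 + b * (1/(n:ℝ)) ≤ ((n:ℝ)+1)^b / ((n:ℝ))^b := by
      rw [← h2, hdiv]; exact hber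
    calc (1 + b * (1/(n:ℝ))) * ((n:ℝ))^b
        ≤ (((n:ℝ)+1)^b / ((n:ℝ))^b) * ((n:ℝ))^b := mul_le_mul_of_nonneg_right h3 hnb.le
      _ = ((n:ℝ)+1)^b := by field_simp
  have key2 : ((n:ℝ) + b) * ((n:ℝ))^b ≤ ((n:ℝ)+1)^b * (n:ℝ) := by
    have h4 : ((n:ℝ) + b) * ((n:ℝ))^b = ((1 + b * (1/(n:ℝ))) * ((n:ℝ))^b) * (n:ℝ) := by
      field_simp
    rw [h4]
    exact mul_le_mul_of_nonneg_right key hn0.le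
  rw [Real.rpow_sub h1n, Real.rpow_sub hn0, Real.rpow_one, Real.rpow_one]
  rw [show (b + (n:ℝ)) * (((n:ℝ)+1) / ((n:ℝ)+1)^b) = ((b+(n:ℝ))*(((n:ℝ))+1))/(((n:ℝ))+1)^b
      from by ring,
    show (((n:ℝ))+1) * ((n:ℝ) / ((n:ℝ))^b) = ((((n:ℝ))+1)*(n:ℝ))/((n:ℝ))^b from by ring,
    div_le_div_iff₀ h1nb hnb]
  nlinarith [mul_le_mul_of_nonneg_left key2 h1n.le]

lemma absT_succ_le (hα0 : 0 < α) (hlam : 0 < lam) {k n : ℕ}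
    (hb : 1 ≤ bet α k) (hn : 1 ≤ n) :
    AbsT α lam (n+1) k ≤ AbsT α lam n k := by
  have hn0 : (0:ℝ) < n := by exact_mod_cast hn
  have hfac : (0:ℝ) < (n.factorial : ℝ) := by exact_mod_cast n.factorial_pos
  have hprod := prod_bet_nonneg hα0 n k
  have hbp := bet_pos hα0 k
  unfold AbsT
  rw [Finset.prod_range_succ, Nat.factorial_succ]
  push_cast
  have hstep := ratio_step hb hn
  calc lam ^ k * ((∏ i ∈ range n, (bet α k + ↑i)) * (bet α k + ↑n)) * (↑n + 1) ^ (1 - bet α k) /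
        ((↑n + 1) * ↑n.factorial)
      = (lam ^ k * (∏ i ∈ range n, (bet α k + ↑i)) / (((n:ℝ)+1) * ↑n.factorial)) *
          ((bet α k + ↑n) * (↑n + 1) ^ (1 - bet α k)) := by ring
    _ ≤ (lam ^ k * (∏ i ∈ range n, (bet α k + ↑i)) / (((n:ℝ)+1) * ↑n.factorial)) *
          ((↑n + 1) * ((n:ℝ)) ^ (1 - bet α k)) := by
        apply mul_le_mul_of_nonneg_left hstep
        positivity
    _ = lam ^ k * (∏ i ∈ range n, (bet α k + ↑i)) * ↑n ^ (1 - bet α k) / ↑n.factorial := by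
        field_simp

lemma absT_le_of_le (hα0 : 0 < α) (hlam : 0 < lam) {k n₀ : ℕ}
    (hb : 1 ≤ bet α k) (hn₀ : 1 ≤ n₀) :
    ∀ n, n₀ ≤ n → AbsT α lam n k ≤ AbsT α lam n₀ k := by
  intro n hn
  induction n, hn using Nat.le_induction with
  | base => exact le_refl _
  | succ n hn ih =>
      exact le_trans (absT_succ_le hα0 hlam hb (le_trans hn₀ hn)) ih

lemma tendsto_Tnk (hα0 : 0 < α) {x : ℝ} (hx : 0 < x) (k : ℕ) :
    Filter.Tendsto (fun n : ℕ => Tnk α lam x n k) atTop (nhds (gx α lam x k)) := by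
  have hbp : 0 < bet α k := bet_pos hα0 k
  have hG : Real.Gamma (bet α k) ≠ 0 := (Real.Gamma_pos_of_pos hbp).ne'
  have heq : ∀ᶠ n : ℕ in atTop, ((-lam)^k * x^(bet α k - 1)) *
      (((n:ℝ)/((n:ℝ) + bet α k)) * (Real.GammaSeq (bet α k) n)⁻¹) = Tnk α lam x n k := by
    filter_upwards [eventually_ge_atTop 1] with n hn
    have hn0 : (0:ℝ) < n := by exact_mod_cast hn
    have hfac : (0:ℝ) < (n.factorial : ℝ) := by exact_mod_cast n.factorial_pos
    have hprodpos : 0 < ∏ j ∈ range (n+1), (bet α k + j) := by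
      apply Finset.prod_pos
      intro i _
      have : (0:ℝ) ≤ i := Nat.cast_nonneg i
      linarith
    have hGS : Real.GammaSeq (bet α k) n
        = (n:ℝ) ^ (bet α k) * (n.factorial : ℝ) / ∏ j ∈ range (n+1), (bet α k + j) := rfl
    have hnbq : (0:ℝ) < (n:ℝ) ^ (bet α k) := Real.rpow_pos_of_pos hn0 _
    unfold Tnk
    rw [rpow_one_sub_div hx n, hGS]
    rw [Finset.prod_range_succ]
    have hnb : ((n:ℝ)) ^ (1 - bet α k) = (n:ℝ) * ((n:ℝ) ^ (bet α k))⁻¹ := by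
      rw [Real.rpow_sub hn0, Real.rpow_one, div_eq_mul_inv]
    rw [hnb]
    have h1 : ((n:ℝ) + bet α k) ≠ 0 := by positivity
    have hprodpos' : (0:ℝ) < ∏ j ∈ range n, (bet α k + j) := by
      apply Finset.prod_pos
      intro i _
      have : (0:ℝ) ≤ i := Nat.cast_nonneg i
      linarith
    field_simp
    ring
  apply Filter.Tendsto.congr' heq
  have h1 : Filter.Tendsto (fun n : ℕ => (n:ℝ)/((n:ℝ) + bet α k)) atTop (nhds 1) :=
    tendsto_natCast_div_add_atTop (bet α k)
  have h2 : Filter.Tendsto (fun n : ℕ => (Real.GammaSeq (bet α k) n)⁻¹) atTop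
      (nhds (Real.Gamma (bet α k))⁻¹) := (Real.GammaSeq_tendsto_Gamma (bet α k)).inv₀ hG
  have h3 := (h1.mul h2).const_mul ((-lam)^k * x^(bet α k - 1))
  have : gx α lam x k = ((-lam)^k * x^(bet α k - 1)) * (1 * (Real.Gamma (bet α k))⁻¹) := by
    unfold gx
    rw [one_mul, div_eq_mul_inv]
  rw [this]
  exact h3

lemma summable_vpow (hα0 : 0 < α) (hα1 : α ≤ 1) (hlam : 0 < lam) {v : ℝ} (hv0 : 0 < v)
    (hvl : lam < v^α) (n : ℕ) :
    Summable (fun k : ℕ => lam^k * (∏ i ∈ range n, (bet α k + i)) * v ^ (1 - bet α k)) := by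
  have hva : 0 < v^α := Real.rpow_pos_of_pos hv0 α
  have hr0 : 0 < lam * (v^α)⁻¹ := by positivity
  have hr1 : lam * (v^α)⁻¹ < 1 := by rw [mul_inv_lt_iff₀ hva, one_mul]; exact hvl
  have hsum := (summable_main hα0 hα1 n hr0 hr1).mul_left (v ^ (1-α))
  apply hsum.congr
  intro k
  have e1 : v ^ (1 - bet α k) = v ^ (1-α) * ((v^α)⁻¹)^k := by
    have e2 : v ^ ((-α) * (k:ℝ)) = ((v^α)⁻¹)^k := by
      rw [Real.rpow_mul hv0.le, Real.rpow_natCast, Real.rpow_neg hv0.le]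
    rw [← e2, ← Real.rpow_add hv0]
    congr 1
    unfold bet
    ring
  rw [e1, mul_pow]
  ring

lemma summable_absTx (hα0 : 0 < α) (hα1 : α ≤ 1) (hlam : 0 < lam) {x : ℝ} (hx : 0 < x)
    {n : ℕ} (hn : 1 ≤ n) (hvl : lam < (((n:ℝ))/x)^α) :
    Summable (fun k : ℕ => AbsT α lam n k * x ^ (bet α k - 1)) := by
  have hn0 : (0:ℝ) < n := by exact_mod_cast hn
  have hv0 : (0:ℝ) < (n:ℝ)/x := by positivity
  have hsum := (summable_vpow hα0 hα1 hlam hv0 hvl n).div_const (n.factorial : ℝ)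
  apply hsum.congr
  intro k
  unfold AbsT
  rw [rpow_one_sub_div hx n]
  ring

lemma summable_Tnk (hα0 : 0 < α) (hα1 : α ≤ 1) (hlam : 0 < lam) {x : ℝ} (hx : 0 < x)
    {n : ℕ} (hn : 1 ≤ n) (hvl : lam < (((n:ℝ))/x)^α) :
    Summable (fun k : ℕ => Tnk α lam x n k) := by
  apply Summable.of_abs
  apply (summable_absTx hα0 hα1 hlam hx hn hvl).congr
  intro k
  exact (abs_Tnk_eq hα0 hlam hx hn k).symm

lemma exists_c (hα0 : 0 < α) (hlam : 0 < lam) {v : ℝ} (hv0 : 0 < v) (hvl : lam < v^α) :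
    ∃ c, 0 < c ∧ lam < c^α ∧ c < v := by
  have hva : 0 < v^α := Real.rpow_pos_of_pos hv0 α
  have hm : 0 < (lam + v^α)/2 := by linarith
  have hkey : (((lam + v^α)/2) ^ (α⁻¹)) ^ α = (lam + v^α)/2 := by
    rw [← Real.rpow_mul hm.le, inv_mul_cancel₀ hα0.ne', Real.rpow_one]
  refine ⟨((lam + v^α)/2) ^ (α⁻¹), by positivity, ?_, ?_⟩
  · rw [hkey]
    linarith
  · by_contra hcon
    push_neg at hcon
    have h1 : v^α ≤ (((lam + v^α)/2) ^ (α⁻¹))^α :=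
      Real.rpow_le_rpow hv0.le hcon hα0.le
    rw [hkey] at h1
    linarith

lemma Qf_div_eq_tsum (hα0 : 0 < α) (hα1 : α ≤ 1) (hlam : 0 < lam) {x : ℝ} (hx : 0 < x)
    {n : ℕ} (hn : 1 ≤ n) (hvl : lam < (((n:ℝ))/x)^α) :
    Qf α lam n ((n:ℝ)/x) / (n.factorial : ℝ) = ∑' k, Tnk α lam x n k := by
  set v := (n:ℝ)/x with hv
  have hn0 : (0:ℝ) < n := by exact_mod_cast hn
  have hv0 : 0 < v := by positivity
  obtain ⟨c, hc0, hcl, hcv⟩ := exists_c hα0 hlam hv0 hvl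
  have hSW := Sf_div_eq_Wf hα0 hα1 hlam hc0 hcl n v hcv
  have hS : Sf α lam n v = v^n * Wf α lam n v := by
    rw [← hSW]
    field_simp
  have hQ : Qf α lam n v = v^(n+1) * Wf α lam n v := by
    unfold Qf
    rw [hS, pow_succ]
    ring
  rw [hQ]
  unfold Wf
  rw [div_eq_mul_inv, mul_comm, ← tsum_mul_left, ← tsum_mul_left]
  apply tsum_congr
  intro k
  unfold gterm Tnk
  have hpow : v^(n+1) * v ^ (-(bet α k) - (n:ℝ)) = v ^ (1 - bet α k) := by
    rw [← Real.rpow_natCast v (n+1), ← Real.rpow_add hv0]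
    congr 1
    push_cast
    ring
  rw [show ((n.factorial:ℝ))⁻¹ * (v^(n+1) * ((-lam)^k * (∏ i ∈ range n, (bet α k + i)) *
        v ^ (-(bet α k) - (n:ℝ))))
      = ((-lam)^k * (∏ i ∈ range n, (bet α k + i)) * (v^(n+1) * v ^ (-(bet α k) - (n:ℝ))))
        / (n.factorial:ℝ) from by ring]
  rw [hpow]

lemma exists_n0 (hα0 : 0 < α) (hlam : 0 < lam) {x : ℝ} (hx : 0 < x) :
    ∃ n₀ : ℕ, 1 ≤ n₀ ∧ ∀ n, n₀ ≤ n → lam < (((n:ℝ))/x)^α := by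
  have h1 : Filter.Tendsto (fun n : ℕ => ((n:ℝ)/x)^α) atTop atTop :=
    (tendsto_rpow_atTop hα0).comp ((tendsto_natCast_atTop_atTop (R := ℝ)).atTop_div_const hx)
  have h2 := h1.eventually_gt_atTop lam
  rw [Filter.eventually_atTop] at h2
  obtain ⟨m, hm⟩ := h2
  exact ⟨max m 1, le_max_right m 1, fun n hn => hm n (le_trans (le_max_left m 1) hn)⟩

lemma bet_ge_one (hα0 : 0 < α) {k : ℕ} (hk : ⌈α⁻¹⌉₊ ≤ k) : 1 ≤ bet α k := by
  have h1 : α⁻¹ ≤ (k:ℝ) := le_trans (Nat.le_ceil α⁻¹) (by exact_mod_cast hk)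
  have h2 : α⁻¹ * α ≤ (k:ℝ) * α := mul_le_mul_of_nonneg_right h1 hα0.le
  rw [inv_mul_cancel₀ hα0.ne'] at h2
  unfold bet
  nlinarith

lemma abs_gx_le (hα0 : 0 < α) (hα1 : α ≤ 1) (hlam : 0 < lam) {x : ℝ} (hx : 0 < x)
    {n₀ : ℕ} (hn₀ : 1 ≤ n₀) {k : ℕ} (hb : 1 ≤ bet α k) :
    |gx α lam x k| ≤ AbsT α lam n₀ k * x ^ (bet α k - 1) := by
  have hlim : Filter.Tendsto (fun n : ℕ => |Tnk α lam x n k|) atTop (nhds (|gx α lam x k|)) :=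
    (tendsto_Tnk hα0 hx k).abs
  apply le_of_tendsto hlim
  filter_upwards [eventually_ge_atTop n₀] with n hn
  rw [abs_Tnk_eq hα0 hlam hx (le_trans hn₀ hn) k]
  have := absT_le_of_le hα0 hlam hb hn₀ n hn
  have hxp : (0:ℝ) < x ^ (bet α k - 1) := Real.rpow_pos_of_pos hx _
  exact mul_le_mul_of_nonneg_right this hxp.le

lemma summable_gx (hα0 : 0 < α) (hα1 : α ≤ 1) (hlam : 0 < lam) {x : ℝ} (hx : 0 < x) :
    Summable (gx α lam x) := by
  obtain ⟨n₀, hn₀1, hn₀⟩ := exists_n0 hα0 hlam hx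
  set k₁ := ⌈α⁻¹⌉₊
  rw [← summable_nat_add_iff k₁]
  apply Summable.of_norm_bounded
    (g := fun k => AbsT α lam n₀ (k + k₁) * x ^ (bet α (k + k₁) - 1))
  · exact (summable_nat_add_iff
      (f := fun k => AbsT α lam n₀ k * x ^ (bet α k - 1)) k₁).mpr
      (summable_absTx hα0 hα1 hlam hx hn₀1 (hn₀ n₀ le_rfl))
  · intro k
    exact abs_gx_le hα0 hα1 hlam hx hn₀1 (bet_ge_one hα0 (Nat.le_add_left k₁ k))

lemma tendsto_QdivFact (hα0 : 0 < α) (hα1 : α ≤ 1) (hlam : 0 < lam) {x : ℝ} (hx : 0 < x) :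
    Filter.Tendsto (fun n : ℕ => Qf α lam n ((n:ℝ)/x) / (n.factorial : ℝ)) atTop
      (nhds (∑' k, gx α lam x k)) := by
  obtain ⟨n₀, hn₀1, hn₀⟩ := exists_n0 hα0 hlam hx
  set k₁ := ⌈α⁻¹⌉₊ with hk₁
  have hsumgx := summable_gx hα0 hα1 hlam hx
  have hmain : Filter.Tendsto (fun n : ℕ => ∑' k, Tnk α lam x n k) atTop
      (nhds (∑' k, gx α lam x k)) := by
    have hsplit2 : ∑' k, gx α lam x k
        = ∑ k ∈ range k₁, gx α lam x k + ∑' k, gx α lam x (k + k₁) :=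
      (Summable.sum_add_tsum_nat_add k₁ hsumgx).symm
    rw [hsplit2]
    have hhead : Filter.Tendsto (fun n : ℕ => ∑ k ∈ range k₁, Tnk α lam x n k) atTop
        (nhds (∑ k ∈ range k₁, gx α lam x k)) :=
      tendsto_finset_sum _ (fun k _ => tendsto_Tnk hα0 hx k)
    have htail : Filter.Tendsto (fun n : ℕ => ∑' k, Tnk α lam x n (k + k₁)) atTop
        (nhds (∑' k, gx α lam x (k + k₁))) := by
      apply tendsto_tsum_of_dominated_convergence
        (bound := fun k => AbsT α lam n₀ (k + k₁) * x ^ (bet α (k + k₁) - 1))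
      · exact (summable_nat_add_iff
          (f := fun k => AbsT α lam n₀ k * x ^ (bet α k - 1)) k₁).mpr
          (summable_absTx hα0 hα1 hlam hx hn₀1 (hn₀ n₀ le_rfl))
      · exact fun k => tendsto_Tnk hα0 hx (k + k₁)
      · filter_upwards [eventually_ge_atTop n₀] with n hn
        intro k
        rw [Real.norm_eq_abs, abs_Tnk_eq hα0 hlam hx (le_trans hn₀1 hn) (k + k₁)]
        have hmono := absT_le_of_le hα0 hlam (bet_ge_one hα0 (Nat.le_add_left k₁ k)) hn₀1 n hn
        have hxp : (0:ℝ) < x ^ (bet α (k + k₁) - 1) := Real.rpow_pos_of_pos hx _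
        exact mul_le_mul_of_nonneg_right hmono hxp.le
    have hcomb := hhead.add htail
    apply Filter.Tendsto.congr' _ hcomb
    filter_upwards [eventually_ge_atTop n₀] with n hn
    exact Summable.sum_add_tsum_nat_add k₁
      (summable_Tnk hα0 hα1 hlam hx (le_trans hn₀1 hn) (hn₀ n hn))
  apply Filter.Tendsto.congr' _ hmain
  filter_upwards [eventually_ge_atTop n₀] with n hn
  exact (Qf_div_eq_tsum hα0 hα1 hlam hx (le_trans hn₀1 hn) (hn₀ n hn)).symm

lemma ml_eq_tsum_gx (hα0 : 0 < α) {y : ℝ} (hy : 0 < y) :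
    y ^ (α - 1) * mittagLeffler α α (-lam * y ^ α) = ∑' k, gx α lam y k := by
  unfold mittagLeffler
  rw [← tsum_mul_left]
  apply tsum_congr
  intro k
  have h1 : (-lam * y ^ α)^k = (-lam)^k * (y^α)^k := mul_pow _ _ k
  have h2 : (y^α)^k = y^(α * (k:ℝ)) := by
    rw [← Real.rpow_natCast (y^α) k, ← Real.rpow_mul hy.le]
  have h4 : ((k:ℝ)*α + α) = bet α k := by unfold bet; ring
  have h3 : y^(α-1) * y^(α*(k:ℝ)) = y ^ (bet α k - 1) := by
    rw [← Real.rpow_add hy]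
    congr 1
    unfold bet
    ring
  unfold gx
  calc y^(α-1) * ((-lam * y^α)^k / Real.Gamma ((k:ℝ)*α+α))
      = (y^(α-1) * y^(α*(k:ℝ))) * (-lam)^k / Real.Gamma (bet α k) := by
        rw [h1, h2, h4]; ring
    _ = (-lam)^k * y^(bet α k - 1) / Real.Gamma (bet α k) := by rw [h3]; ring

end Limit

end MLaux

theorem rpow_mul_mittagLeffler_antitone (α lam : ℝ) (hα0 : 0 < α) (hα1 : α ≤ 1)
    (hlam : 0 < lam) :
    ∀ x y : ℝ, 0 < x → x ≤ y →
      y ^ (α - 1) * mittagLeffler α α (-lam * y ^ α)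
        ≤ x ^ (α - 1) * mittagLeffler α α (-lam * x ^ α) := by
  intro x y hx hxy
  have hy : 0 < y := lt_of_lt_of_le hx hxy
  rw [MLaux.ml_eq_tsum_gx hα0 hy, MLaux.ml_eq_tsum_gx hα0 hx]
  apply le_of_tendsto_of_tendsto (MLaux.tendsto_QdivFact hα0 hα1 hlam hy)
    (MLaux.tendsto_QdivFact hα0 hα1 hlam hx)
  filter_upwards [Filter.eventually_ge_atTop 1] with n hn
  have hn0 : (0:ℝ) < n := by exact_mod_cast hn
  have h1 : (0:ℝ) < (n:ℝ)/y := by positivity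
  have h2 : (n:ℝ)/y ≤ (n:ℝ)/x := by gcongr
  have hQ : MLaux.Qf α lam n ((n:ℝ)/y) ≤ MLaux.Qf α lam n ((n:ℝ)/x) :=
    MLaux.Qf_monotoneOn hα0 hα1 hlam (Set.mem_Ioi.mpr h1)
      (Set.mem_Ioi.mpr (lt_of_lt_of_le h1 h2)) h2
  have hfac : (0:ℝ) < (n.factorial : ℝ) := by exact_mod_cast n.factorial_pos
  exact (div_le_div_iff_of_pos_right hfac).mpr hQ
end

section
/- Let 0 < H < 1/2, 0 < α ≤ 1 with α + H > 1. There exists a constant C > 0 (depending only on α and H) such that for every λ > 0 and every t > 0, ∫_0^t (t/τ)^{2H-1} (t-τ)^{2α+2H-3} E_{α,α}(-λ (t-τ)^α)² dτ ≤ C t^{2α+2H-2}. -/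
open Real intervalIntegral

open Filter Topology MeasureTheory

namespace MLAux


/-- `p a n` is the `n`-th Taylor coefficient of `(1-z)^{-a}`. -/
noncomputable def p (a : ℝ) (n : ℕ) : ℝ := ∏ j ∈ Finset.range n, (a + j) / (j + 1)

lemma p_zero (a : ℝ) : p a 0 = 1 := by simp [p]

lemma p_succ (a : ℝ) (n : ℕ) : p a (n+1) = p a n * ((a + n)/(n+1)) := by
  rw [p, Finset.prod_range_succ]; rfl

lemma p_nonneg {a : ℝ} (ha : 0 ≤ a) (n : ℕ) : 0 ≤ p a n := by
  refine Finset.prod_nonneg fun j _ => div_nonneg (by positivity) (by positivity)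

lemma p_pos {a : ℝ} (ha : 0 < a) (n : ℕ) : 0 < p a n := by
  refine Finset.prod_pos fun j _ => div_pos (by positivity) (by positivity)

lemma key (a : ℝ) (n : ℕ) : ((n:ℝ)+1) * p a (n+1) = (a + n) * p a n := by
  rw [p_succ]; field_simp

lemma vandermonde (a b : ℝ) : ∀ n : ℕ,
    ∑ m ∈ Finset.range (n+1), p a m * p b (n - m) = p (a+b) n := by
  intro n
  induction n with
  | zero => simp [p]
  | succ n ih =>
    have hA : ∑ m ∈ Finset.range (n+2), (m:ℝ) * (p a m * p b (n+1-m))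
        = ∑ m ∈ Finset.range (n+1), (a + m) * (p a m * p b (n-m)) := by
      rw [Finset.sum_range_succ']
      simp only [Nat.cast_zero, zero_mul, add_zero, Nat.cast_add, Nat.cast_one]
      refine Finset.sum_congr rfl fun i _ => ?_
      have h1 : n + 1 - (i+1) = n - i := by omega
      rw [h1]
      calc ((i:ℝ)+1) * (p a (i+1) * p b (n-i)) = (((i:ℝ)+1) * p a (i+1)) * p b (n-i) := by ring
        _ = ((a + i) * p a i) * p b (n-i) := by rw [key a i]
        _ = (a + i) * (p a i * p b (n-i)) := by ring
    have hB : ∑ m ∈ Finset.range (n+2), ((n+1-m : ℕ):ℝ) * (p a m * p b (n+1-m))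
        = ∑ m ∈ Finset.range (n+1), (b + ((n-m : ℕ):ℝ)) * (p a m * p b (n-m)) := by
      rw [Finset.sum_range_succ]
      simp only [Nat.sub_self, Nat.cast_zero, zero_mul, add_zero]
      refine Finset.sum_congr rfl fun m hm => ?_
      have h1 : n + 1 - m = (n - m) + 1 := by
        have : m ≤ n := by simpa [Nat.lt_succ_iff] using hm
        omega
      rw [h1]
      push_cast
      calc (((n-m:ℕ):ℝ)+1) * (p a m * p b ((n-m)+1))
          = ((((n-m:ℕ):ℝ)+1) * p b ((n-m)+1)) * p a m := by ring
        _ = ((b + ((n-m:ℕ):ℝ)) * p b (n-m)) * p a m := by rw [key b (n-m)]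
        _ = (b + ((n-m:ℕ):ℝ)) * (p a m * p b (n-m)) := by ring
    have hAB : ((n:ℝ)+1) * ∑ m ∈ Finset.range (n+2), p a m * p b (n+1-m)
        = (a + b + (n:ℝ)) * p (a+b) n := by
      rw [Finset.mul_sum]
      have h1 : ∀ m ∈ Finset.range (n+2), ((n:ℝ)+1) * (p a m * p b (n+1-m))
          = (m:ℝ) * (p a m * p b (n+1-m)) + ((n+1-m:ℕ):ℝ) * (p a m * p b (n+1-m)) := by
        intro m hm
        have hm' : m ≤ n+1 := by simpa [Nat.lt_succ_iff] using hm
        have h2 : ((n+1-m:ℕ):ℝ) = (n:ℝ)+1-m := by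
          push_cast [Nat.cast_sub hm']; ring
        rw [h2]; ring
      rw [Finset.sum_congr rfl h1, Finset.sum_add_distrib, hA, hB, ← Finset.sum_add_distrib]
      have h3 : ∀ m ∈ Finset.range (n+1),
          (a+(m:ℝ))*(p a m * p b (n-m)) + (b+((n-m:ℕ):ℝ))*(p a m * p b (n-m))
          = (a+b+(n:ℝ)) * (p a m * p b (n-m)) := by
        intro m hm
        have hm' : m ≤ n := by simpa [Nat.lt_succ_iff] using hm
        have h2 : ((n-m:ℕ):ℝ) = (n:ℝ)-m := by push_cast [Nat.cast_sub hm']; ring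
        rw [h2]; ring
      rw [Finset.sum_congr rfl h3, ← Finset.mul_sum, ih]
    have hk := key (a+b) n
    have hne : ((n:ℝ)+1) ≠ 0 := by positivity
    exact mul_left_cancel₀ hne (hAB.trans hk.symm)





noncomputable def b (n : ℕ) (s : ℝ) : ℝ := (n:ℝ)^(1-s) * p s n

lemma b_pos {s : ℝ} (hs : 0 < s) {n : ℕ} (hn : 1 ≤ n) : 0 < b n s := by
  have : (0:ℝ) < n := by exact_mod_cast hn
  exact mul_pos (rpow_pos_of_pos this _) (p_pos hs n)

lemma b_nonneg {s : ℝ} (hs : 0 ≤ s) (n : ℕ) : 0 ≤ b n s :=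
  mul_nonneg (rpow_nonneg (Nat.cast_nonneg n) _) (p_nonneg hs n)

/-- For `0 < s ≤ 1` and `n ≥ 1`, `b n s ≤ 1`. -/
lemma b_le_one {s : ℝ} (hs0 : 0 < s) (hs1 : s ≤ 1) {n : ℕ} (hn : 1 ≤ n) : b n s ≤ 1 := by
  have hnR : (1:ℝ) ≤ (n:ℝ) := by exact_mod_cast hn
  have hnR0 : (0:ℝ) < (n:ℝ) := by linarith
  have h1 : p s n ≤ Real.exp ((s-1) * ∑ j ∈ Finset.range n, (1:ℝ)/(j+1)) := by
    rw [Finset.mul_sum, Real.exp_sum]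
    refine Finset.prod_le_prod (fun j _ => div_nonneg (by positivity) (by positivity))
      (fun j _ => ?_)
    have hj : (0:ℝ) < (j:ℝ)+1 := by positivity
    have heq : (s + j)/((j:ℝ)+1) = 1 + (s-1) * (1/((j:ℝ)+1)) := by field_simp; ring
    rw [heq]
    have := Real.add_one_le_exp ((s-1) * (1/((j:ℝ)+1)))
    linarith
  have h2 : Real.log n ≤ ∑ j ∈ Finset.range n, (1:ℝ)/(j+1) := by
    have hh1 := log_add_one_le_harmonic n
    have hh : (harmonic n : ℝ) = ∑ j ∈ Finset.range n, (1:ℝ)/(j+1) := by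
      rw [harmonic]; push_cast; simp [one_div]
    have hlog : Real.log n ≤ Real.log ((n:ℝ)+1) :=
      Real.log_le_log hnR0 (by linarith)
    calc Real.log n ≤ Real.log ((n:ℝ)+1) := hlog
      _ ≤ (harmonic n : ℝ) := by exact_mod_cast hh1
      _ = _ := hh
  have h3 : (s-1) * ∑ j ∈ Finset.range n, (1:ℝ)/(j+1) ≤ (s-1) * Real.log n :=
    mul_le_mul_of_nonpos_left h2 (by linarith)
  have h4 : p s n ≤ (n:ℝ)^(s-1) := by
    calc p s n ≤ _ := h1
      _ ≤ Real.exp ((s-1) * Real.log n) := Real.exp_le_exp.mpr h3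
      _ = (n:ℝ)^(s-1) := by rw [mul_comm, Real.exp_mul, Real.exp_log hnR0]
  calc b n s = (n:ℝ)^(1-s) * p s n := rfl
    _ ≤ (n:ℝ)^(1-s) * (n:ℝ)^(s-1) :=
        mul_le_mul_of_nonneg_left h4 (rpow_nonneg (le_of_lt hnR0) _)
    _ = 1 := by rw [← Real.rpow_add hnR0]; norm_num

/-- auxiliary: `(1-u)^q * (1+q*u) ≤ 1` for `0 ≤ u ≤ 1`, `0 ≤ q`. -/
lemma aux_ineq {u q : ℝ} (hu0 : 0 ≤ u) (hu1 : u ≤ 1) (hq : 0 ≤ q) :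
    (1-u)^q * (1+q*u) ≤ 1 := by
  have h1 : (1-u)^q ≤ Real.exp (-(q*u)) := by
    have h0 : (1-u) ≤ Real.exp (-u) := by
      have := Real.add_one_le_exp (-u); linarith
    calc (1-u)^q ≤ (Real.exp (-u))^q := Real.rpow_le_rpow (by linarith) h0 hq
      _ = Real.exp (-u * q) := by rw [← Real.exp_mul]
      _ = Real.exp (-(q*u)) := by ring_nf
  have h2 : 1 + q*u ≤ Real.exp (q*u) := by
    have := Real.add_one_le_exp (q*u); linarith
  calc (1-u)^q * (1+q*u) ≤ Real.exp (-(q*u)) * Real.exp (q*u) :=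
        mul_le_mul h1 h2 (by positivity) (by positivity)
    _ = 1 := by rw [← Real.exp_add]; simp

/-- For `s ≥ 1`, `b` is antitone in `n ≥ 1`. -/
lemma b_antitone_succ {s : ℝ} (hs : 1 ≤ s) {n : ℕ} (hn : 1 ≤ n) : b (n+1) s ≤ b n s := by
  have hnR : (1:ℝ) ≤ (n:ℝ) := by exact_mod_cast hn
  have hnR0 : (0:ℝ) < (n:ℝ) := by linarith
  have hn1 : (0:ℝ) < (n:ℝ)+1 := by linarith
  have hps : 0 < p s n := p_pos (by linarith) n
  have hkey : (n:ℝ)^(s-1) * (s+n) ≤ ((n:ℝ)+1)^(s-1) * ((n:ℝ)+1) := by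
    have hu0 : (0:ℝ) ≤ 1/((n:ℝ)+1) := by positivity
    have hu1 : 1/((n:ℝ)+1) ≤ 1 := by rw [div_le_one hn1]; linarith
    have haux := aux_ineq hu0 hu1 (by linarith : (0:ℝ) ≤ s - 1)
    have h1u : (1 - 1/((n:ℝ)+1)) = (n:ℝ)/((n:ℝ)+1) := by field_simp; ring
    have h2u : 1 + (s-1)*(1/((n:ℝ)+1)) = (s+(n:ℝ))/((n:ℝ)+1) := by field_simp; ring
    rw [h1u, h2u, Real.div_rpow (le_of_lt hnR0) (le_of_lt hn1), div_mul_div_comm,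
      div_le_one (by positivity)] at haux
    linarith [haux]
  have e1 : ((n:ℝ)+1)^(1-s) = (((n:ℝ)+1)^(s-1))⁻¹ := by
    rw [← Real.rpow_neg (le_of_lt hn1)]; ring_nf
  have e2 : (n:ℝ)^(1-s) = ((n:ℝ)^(s-1))⁻¹ := by
    rw [← Real.rpow_neg (le_of_lt hnR0)]; ring_nf
  have hA : (0:ℝ) < ((n:ℝ)+1)^(s-1) := rpow_pos_of_pos hn1 _
  have hB : (0:ℝ) < (n:ℝ)^(s-1) := rpow_pos_of_pos hnR0 _
  show ((n+1:ℕ):ℝ)^(1-s) * p s (n+1) ≤ (n:ℝ)^(1-s) * p s n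
  push_cast
  rw [p_succ, e1, e2]
  rw [inv_mul_eq_div, inv_mul_eq_div, div_le_div_iff₀ hA hB]
  push_cast
  calc p s n * ((s+(n:ℝ))/((n:ℝ)+1)) * (n:ℝ)^(s-1)
      = p s n * (((n:ℝ)^(s-1) * (s+(n:ℝ))) / ((n:ℝ)+1)) := by ring
    _ ≤ p s n * ((((n:ℝ)+1)^(s-1) * ((n:ℝ)+1)) / ((n:ℝ)+1)) := by
        apply mul_le_mul_of_nonneg_left _ (le_of_lt hps)
        gcongr
    _ = p s n * ((n:ℝ)+1)^(s-1) := by field_simp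
  
/-- `b n s ≤ b m s` for `1 ≤ m ≤ n`, `s ≥ 1`. -/
lemma b_antitone {s : ℝ} (hs : 1 ≤ s) {m n : ℕ} (hm : 1 ≤ m) (hmn : m ≤ n) :
    b n s ≤ b m s := by
  induction n with
  | zero => omega
  | succ n ih =>
    rcases Nat.lt_or_ge m (n+1) with h | h
    · have hmn' : m ≤ n := by omega
      exact (b_antitone_succ hs (by omega)).trans (ih hmn')
    · have : m = n+1 := by omega
      subst this; rfl

/-- Euler limit: `b n s → 1/Γ(s)`. -/
lemma b_tendsto {s : ℝ} (hs : 0 < s) :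
    Tendsto (fun n : ℕ => b n s) atTop (𝓝 (1 / Real.Gamma s)) := by
  have hΓ : 0 < Real.Gamma s := Real.Gamma_pos_of_pos hs
  have hident : ∀ n : ℕ, 1 ≤ n → b n s = ((n:ℝ)/(s+n)) / Real.GammaSeq s n := by
    intro n hn
    have hnR0 : (0:ℝ) < (n:ℝ) := by exact_mod_cast hn
    have hps : 0 < p s n := p_pos hs n
    have hsn : (0:ℝ) < s + n := by positivity
    have hfact : ∏ j ∈ Finset.range n, ((j:ℝ)+1) = (Nat.factorial n : ℝ) := by
      rw [← Finset.prod_range_add_one_eq_factorial]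
      push_cast
      rfl
    have hfact0 : (0:ℝ) < (Nat.factorial n : ℝ) := by positivity
    have hpn : p s n * (Nat.factorial n : ℝ) = ∏ j ∈ Finset.range n, (s+(j:ℝ)) := by
      rw [p, Finset.prod_div_distrib, hfact]
      field_simp
    have hprod : ∏ j ∈ Finset.range (n+1), (s+(j:ℝ)) = p s n * (Nat.factorial n : ℝ) * (s+n) := by
      rw [Finset.prod_range_succ, hpn]
    have hGS : Real.GammaSeq s n = (n:ℝ)^s / (p s n * (s+n)) := by
      rw [Real.GammaSeq, hprod]
      field_simp
    rw [hGS, b]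
    have hns : (0:ℝ) < (n:ℝ)^s := rpow_pos_of_pos hnR0 _
    have hpow : (n:ℝ)^(1-s) = (n:ℝ) / (n:ℝ)^s := by
      rw [Real.rpow_sub hnR0, Real.rpow_one]
    rw [hpow]
    field_simp
  have h1 : Tendsto (fun n : ℕ => ((n:ℝ)/(s+n)) / Real.GammaSeq s n) atTop
      (𝓝 (1 / Real.Gamma s)) := by
    refine Tendsto.div ?_ (Real.GammaSeq_tendsto_Gamma s) (ne_of_gt hΓ)
    have := tendsto_natCast_div_add_atTop (𝕜 := ℝ) s
    refine this.congr fun n => ?_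
    rw [add_comm]
  refine h1.congr' ?_
  filter_upwards [eventually_ge_atTop 1] with n hn
  exact (hident n hn).symm





/-- ratio bound: `p (s+α) n ≤ (1+α/s)^n * p s n` for `s > 0`. -/
lemma p_ratio {α s : ℝ} (hs : 0 < s) (hα0 : 0 < α) (n : ℕ) :
    p (s+α) n ≤ (1+α/s)^n * p s n := by
  have hrw : (1+α/s)^n * p s n = ∏ j ∈ Finset.range n, ((1+α/s) * ((s+(j:ℝ))/((j:ℝ)+1))) := by
    rw [Finset.prod_mul_distrib, Finset.prod_const, Finset.card_range, p]
  rw [p, hrw]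
  refine Finset.prod_le_prod (fun j _ => div_nonneg (by positivity) (by positivity))
    (fun j _ => ?_)
  rw [mul_div_assoc']
  apply div_le_div_of_nonneg_right _ (by positivity)
  have h1 : (1+α/s) * (s+(j:ℝ)) = s + j + α + α*j/s := by field_simp; ring
  rw [h1]
  have : 0 ≤ α*(j:ℝ)/s := by positivity
  linarith

/-- Core summability by ratio test. -/
lemma summable_core {α c : ℝ} (hc0 : 0 ≤ c) (hc1 : c < 1) (hα0 : 0 < α) (n : ℕ) :
    Summable (fun k : ℕ => c^k * p (((k:ℝ)+1)*α) n) := by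
  rcases eq_or_lt_of_le hc0 with rfl | hc0'
  · apply summable_of_ne_finset_zero (s := ({0} : Finset ℕ))
    intro k hk
    have hk0 : k ≠ 0 := by simpa using hk
    simp [zero_pow hk0]
  refine summable_of_ratio_norm_eventually_le (r := (1+c)/2) (by linarith) ?_
  have hev : ∀ᶠ k : ℕ in atTop, c * (1+1/((k:ℝ)+1))^n ≤ (1+c)/2 := by
    have ht : Tendsto (fun k : ℕ => c * (1+1/((k:ℝ)+1))^n) atTop (𝓝 (c * 1^n)) := by
      refine Tendsto.const_mul c (Tendsto.pow ?_ n)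
      have h0 : Tendsto (fun k : ℕ => 1/((k:ℝ)+1)) atTop (𝓝 0) :=
        tendsto_one_div_add_atTop_nhds_zero_nat
      simpa using h0.const_add 1
    have hlt : c * 1^n < (1+c)/2 := by simp; linarith
    exact (ht.eventually_lt_const hlt).mono fun k hk => le_of_lt hk
  filter_upwards [hev] with k hk
  have hsk : 0 < ((k:ℝ)+1)*α := by positivity
  have hp1 : 0 ≤ p (((k:ℝ)+1)*α) n := p_nonneg (by positivity) n
  have hp2 : 0 ≤ p (((k:ℝ)+1)*α + α) n := p_nonneg (by positivity) n
  have hstep : p (((k:ℝ)+1)*α + α) n ≤ (1+1/((k:ℝ)+1))^n * p (((k:ℝ)+1)*α) n := by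
    refine (p_ratio hsk hα0 n).trans ?_
    apply mul_le_mul_of_nonneg_right _ hp1
    apply pow_le_pow_left₀ (by positivity)
    have heq : α/(((k:ℝ)+1)*α) = 1/((k:ℝ)+1) := by
      rw [mul_comm]; field_simp
    rw [heq]
  have hcast : ((((k+1):ℕ):ℝ)+1)*α = ((k:ℝ)+1)*α + α := by push_cast; ring
  rw [Real.norm_eq_abs, Real.norm_eq_abs, hcast,
    abs_of_nonneg (mul_nonneg (pow_nonneg hc0 _) hp2),
    abs_of_nonneg (mul_nonneg (pow_nonneg hc0 _) hp1)]
  calc c^(k+1) * p (((k:ℝ)+1)*α + α) n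
      ≤ c^(k+1) * ((1+1/((k:ℝ)+1))^n * p (((k:ℝ)+1)*α) n) :=
        mul_le_mul_of_nonneg_left hstep (pow_nonneg hc0 _)
    _ = (c * (1+1/((k:ℝ)+1))^n) * (c^k * p (((k:ℝ)+1)*α) n) := by ring
    _ ≤ (1+c)/2 * (c^k * p (((k:ℝ)+1)*α) n) :=
        mul_le_mul_of_nonneg_right hk (mul_nonneg (pow_nonneg hc0 _) hp1)

/-- The scaled resolvent sequence. -/
noncomputable def F (α c : ℝ) (n : ℕ) : ℝ := ∑' k : ℕ, (-c)^k * p (((k:ℝ)+1)*α) n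

lemma summable_F {α c : ℝ} (hc0 : 0 ≤ c) (hc1 : c < 1) (hα0 : 0 < α) (n : ℕ) :
    Summable (fun k : ℕ => (-c)^k * p (((k:ℝ)+1)*α) n) := by
  refine Summable.of_norm ?_
  have : ∀ k : ℕ, ‖(-c)^k * p (((k:ℝ)+1)*α) n‖ = c^k * p (((k:ℝ)+1)*α) n := by
    intro k
    rw [Real.norm_eq_abs, abs_mul, abs_pow, abs_neg, abs_of_nonneg hc0,
      abs_of_nonneg (p_nonneg (by positivity) n)]
  rw [funext this]
  exact summable_core hc0 hc1 hα0 n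

lemma F_zero {α c : ℝ} (hc0 : 0 ≤ c) (hc1 : c < 1) : F α c 0 = 1/(1+c) := by
  have hnorm : ‖-c‖ < 1 := by rw [norm_neg, Real.norm_eq_abs, abs_of_nonneg hc0]; exact hc1
  have h1 : F α c 0 = ∑' k : ℕ, (-c)^k := by
    refine tsum_congr fun k => ?_
    rw [p_zero, mul_one]
  rw [h1, tsum_geometric_of_norm_lt_one hnorm, sub_neg_eq_add, one_div]

lemma F_recursion {α c : ℝ} (hc0 : 0 ≤ c) (hc1 : c < 1) (hα0 : 0 < α) (n : ℕ) :
    (1+c) * F α c n = p α n - c * ∑ m ∈ Finset.range n, p α (n-m) * F α c m := by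
  have hsum : ∀ m : ℕ, Summable (fun k : ℕ => (-c)^k * (p (((k:ℝ)+1)*α) m * p α (n-m))) := by
    intro m
    have := (summable_F hc0 hc1 hα0 m).mul_right (p α (n-m))
    refine this.congr fun k => ?_
    ring
  have hswap : ∑ m ∈ Finset.range (n+1), p α (n-m) * F α c m
      = ∑' k : ℕ, (-c)^k * p (((k:ℝ)+1)*α + α) n := by
    have h1 : ∀ m ∈ Finset.range (n+1), p α (n-m) * F α c m
        = ∑' k : ℕ, (-c)^k * (p (((k:ℝ)+1)*α) m * p α (n-m)) := by
      intro m _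
      rw [F, ← tsum_mul_left]
      exact tsum_congr fun k => by ring
    rw [Finset.sum_congr rfl h1, ← Summable.tsum_finsetSum (fun m _ => hsum m)]
    refine tsum_congr fun k => ?_
    rw [← Finset.mul_sum, vandermonde (((k:ℝ)+1)*α) α n]
  have hshift : F α c n = p α n + ∑' k : ℕ, (-c)^(k+1) * p (((((k+1):ℕ):ℝ)+1)*α) n := by
    have h0 := Summable.tsum_eq_zero_add (summable_F hc0 hc1 hα0 n)
    rw [F, h0]
    norm_num
  have hmain : c * ∑ m ∈ Finset.range (n+1), p α (n-m) * F α c m = p α n - F α c n := by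
    rw [hswap, ← tsum_mul_left]
    have h1 : ∀ k : ℕ, c * ((-c)^k * p (((k:ℝ)+1)*α + α) n)
        = -((-c)^(k+1) * p (((((k+1):ℕ):ℝ)+1)*α) n) := by
      intro k
      have hcast : (((((k+1)):ℕ):ℝ)+1)*α = ((k:ℝ)+1)*α + α := by push_cast; ring
      rw [hcast, pow_succ]
      ring
    rw [tsum_congr h1, tsum_neg]
    have h2 : ∑' k : ℕ, (-c)^(k+1) * p (((((k+1):ℕ):ℝ)+1)*α) n = F α c n - p α n := by
      rw [hshift]; ring
    rw [h2]; ring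
  have hsplit : ∑ m ∈ Finset.range (n+1), p α (n-m) * F α c m
      = (∑ m ∈ Finset.range n, p α (n-m) * F α c m) + F α c n := by
    rw [Finset.sum_range_succ, Nat.sub_self, p_zero, one_mul]
  rw [hsplit] at hmain
  linarith [hmain]

/-- The invariant identity, for `n ≥ 1`. -/
lemma F_invariant {α c : ℝ} (hc0 : 0 ≤ c) (hc1 : c < 1) (hα0 : 0 < α) {n : ℕ} (hn : 1 ≤ n) :
    (1+c) * F α c n + c * ∑ m ∈ Finset.Ico 1 n, p α (n-m) * F α c m = p α n / (1+c) := by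
  have hrec := F_recursion hc0 hc1 hα0 n
  have hsplit : ∑ m ∈ Finset.range n, p α (n-m) * F α c m
      = p α n * F α c 0 + ∑ m ∈ Finset.Ico 1 n, p α (n-m) * F α c m := by
    rw [Finset.range_eq_Ico, Finset.sum_eq_sum_Ico_succ_bot hn]
    simp
  rw [hsplit, F_zero hc0 hc1] at hrec
  have h1c : (0:ℝ) < 1 + c := by linarith
  field_simp at hrec ⊢
  linarith [hrec]

/-- ratio monotonicity -/
lemma ratio_mono {α : ℝ} (hα1 : α ≤ 1) {i m : ℕ} (him : i ≤ m) :
    (α+(i:ℝ))/((i:ℝ)+1) ≤ (α+(m:ℝ))/((m:ℝ)+1) := by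
  have hiR : (i:ℝ) ≤ (m:ℝ) := by exact_mod_cast him
  rw [div_le_div_iff₀ (by positivity) (by positivity)]
  nlinarith

/-- Kaluza-type positivity. -/
lemma F_nonneg {α c : ℝ} (hc0 : 0 ≤ c) (hc1 : c < 1) (hα0 : 0 < α) (hα1 : α ≤ 1) :
    ∀ n : ℕ, 0 ≤ F α c n := by
  intro n
  induction n using Nat.strong_induction_on with
  | _ n ih =>
    match n with
    | 0 => rw [F_zero hc0 hc1]; positivity
    | 1 =>
      have := F_invariant hc0 hc1 hα0 (le_refl 1)
      simp only [Finset.Ico_self, Finset.sum_empty, mul_zero, add_zero] at this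
      have hp : 0 ≤ p α 1 := p_nonneg (le_of_lt hα0) 1
      have h1c : (0:ℝ) < 1 + c := by linarith
      have hF1 : 0 ≤ (1+c) * F α c 1 := this ▸ div_nonneg hp (by linarith)
      nlinarith [hF1]
    | (m+2) =>
      set n := m + 2 with hn
      have hm1 : 1 ≤ m + 1 := by omega
      have hinv := F_invariant hc0 hc1 hα0 (show 1 ≤ n by omega)
      have hprev := F_invariant hc0 hc1 hα0 hm1
      set R : ℝ := (α+((m:ℝ)+1))/(((m:ℝ)+1)+1) with hR
      have hR0 : 0 ≤ R := by positivity
      have hpsucc : p α n = p α (m+1) * R := by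
        rw [hn, hR, p_succ]
        push_cast
        ring_nf
      -- bound the sum
      have hkey : c * ∑ j ∈ Finset.Ico 1 n, p α (n-j) * F α c j
          ≤ R * (c * ∑ j ∈ Finset.Ico 1 (m+1), p α (m+1-j) * F α c j + (1+c) * F α c (m+1)) := by
        have hsplit : ∑ j ∈ Finset.Ico 1 n, p α (n-j) * F α c j
            = (∑ j ∈ Finset.Ico 1 (m+1), p α (n-j) * F α c j) + p α 1 * F α c (m+1) := by
          rw [hn]
          rw [Finset.sum_Ico_succ_top hm1]
          simp
        rw [hsplit]
        have hterm : ∀ j ∈ Finset.Ico 1 (m+1), p α (n-j) * F α c j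
            ≤ R * (p α (m+1-j) * F α c j) := by
          intro j hj
          have hj1 : 1 ≤ j := (Finset.mem_Ico.mp hj).1
          have hjm : j ≤ m := by
            have := (Finset.mem_Ico.mp hj).2; omega
          have hsub : n - j = (m+1-j) + 1 := by omega
          have hFj : 0 ≤ F α c j := ih j (by omega)
          have hp1 : 0 ≤ p α (m+1-j) := p_nonneg (le_of_lt hα0) _
          rw [hsub, p_succ]
          have hr : (α+((m+1-j:ℕ):ℝ))/(((m+1-j:ℕ):ℝ)+1) ≤ R := by
            have h := ratio_mono hα1 (show m+1-j ≤ m+1 by omega) (α := α)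
            push_cast at h
            rw [hR]
            convert h using 2 <;> push_cast <;> ring
          calc p α (m+1-j) * ((α+((m+1-j:ℕ):ℝ))/(((m+1-j:ℕ):ℝ)+1)) * F α c j
              ≤ p α (m+1-j) * R * F α c j := by
                apply mul_le_mul_of_nonneg_right _ hFj
                exact mul_le_mul_of_nonneg_left hr hp1
            _ = R * (p α (m+1-j) * F α c j) := by ring
        have hlast : c * (p α 1 * F α c (m+1)) ≤ R * ((1+c) * F α c (m+1)) := by
          have hF : 0 ≤ F α c (m+1) := ih (m+1) (by omega)
          have hp1 : p α 1 = α := by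
            rw [show (1:ℕ) = 0 + 1 from rfl, p_succ, p_zero]
            norm_num
          have hαR : α ≤ R := by
            have h := ratio_mono hα1 (show 0 ≤ m+1 by omega) (α := α)
            push_cast at h
            simpa [hR] using h
          have : c * α ≤ R * (1+c) := by nlinarith
          calc c * (p α 1 * F α c (m+1)) = (c * α) * F α c (m+1) := by rw [hp1]; ring
            _ ≤ (R * (1+c)) * F α c (m+1) := mul_le_mul_of_nonneg_right this hF
            _ = R * ((1+c) * F α c (m+1)) := by ring
        have hsum_le : c * ∑ j ∈ Finset.Ico 1 (m+1), p α (n-j) * F α c j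
            ≤ R * (c * ∑ j ∈ Finset.Ico 1 (m+1), p α (m+1-j) * F α c j) := by
          rw [Finset.mul_sum, Finset.mul_sum, Finset.mul_sum]
          refine Finset.sum_le_sum fun j hj => ?_
          have := hterm j hj
          calc c * (p α (n-j) * F α c j) ≤ c * (R * (p α (m+1-j) * F α c j)) :=
                mul_le_mul_of_nonneg_left this hc0
            _ = R * (c * (p α (m+1-j) * F α c j)) := by ring
        calc c * ((∑ j ∈ Finset.Ico 1 (m+1), p α (n-j) * F α c j) + p α 1 * F α c (m+1))
            = c * ∑ j ∈ Finset.Ico 1 (m+1), p α (n-j) * F α c j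
              + c * (p α 1 * F α c (m+1)) := by ring
          _ ≤ R * (c * ∑ j ∈ Finset.Ico 1 (m+1), p α (m+1-j) * F α c j)
              + R * ((1+c) * F α c (m+1)) := add_le_add hsum_le hlast
          _ = R * (c * ∑ j ∈ Finset.Ico 1 (m+1), p α (m+1-j) * F α c j + (1+c) * F α c (m+1)) := by
              ring
      have h1c : (0:ℝ) < 1 + c := by linarith
      -- from hprev : (1+c) F(m+1) + c ∑ = p α (m+1)/(1+c)
      have h2 : c * ∑ j ∈ Finset.Ico 1 (m+1), p α (m+1-j) * F α c j + (1+c) * F α c (m+1)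
          = p α (m+1) / (1+c) := by linarith [hprev]
      rw [h2] at hkey
      have h3 : R * (p α (m+1)/(1+c)) = p α n / (1+c) := by
        rw [hpsucc]; ring
      rw [h3] at hkey
      -- hinv : (1+c) F n + c ∑ = p α n/(1+c)
      nlinarith [hinv, hkey]

/-- Upper bound. -/
lemma F_le {α c : ℝ} (hc0 : 0 ≤ c) (hc1 : c < 1) (hα0 : 0 < α) (hα1 : α ≤ 1) (n : ℕ) :
    F α c n ≤ p α n := by
  match n with
  | 0 =>
    rw [F_zero hc0 hc1, p_zero]
    rw [div_le_one (by linarith)]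
    linarith
  | (m+1) =>
    have hinv := F_invariant hc0 hc1 hα0 (show 1 ≤ m+1 by omega)
    have hsum : 0 ≤ c * ∑ j ∈ Finset.Ico 1 (m+1), p α (m+1-j) * F α c j := by
      apply mul_nonneg hc0
      apply Finset.sum_nonneg fun j _ =>
        mul_nonneg (p_nonneg (le_of_lt hα0) _) (F_nonneg hc0 hc1 hα0 hα1 j)
    have h1c : (0:ℝ) < 1 + c := by linarith
    have hp : 0 ≤ p α (m+1) := p_nonneg (le_of_lt hα0) _
    have h1 : (1+c) * F α c (m+1) ≤ p α (m+1) / (1+c) := by linarith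
    have h2 : p α (m+1) / (1+c) ≤ p α (m+1) := by
      apply div_le_self hp (by linarith)
    nlinarith [h1, h2, F_nonneg hc0 hc1 hα0 hα1 (m+1)]





/-- scaling identity -/
lemma scale_id {α : ℝ} (y : ℝ) {n : ℕ} (hn : 1 ≤ n) (k : ℕ) :
    y^k * b n (((k:ℝ)+1)*α) = (n:ℝ)^(1-α) * ((y/(n:ℝ)^α)^k * p (((k:ℝ)+1)*α) n) := by
  have hn0 : (0:ℝ) < (n:ℝ) := by exact_mod_cast hn
  have hna : (0:ℝ) < (n:ℝ)^α := rpow_pos_of_pos hn0 _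
  have h1 : (n:ℝ)^(1-((k:ℝ)+1)*α) = (n:ℝ)^(1-α) * (((n:ℝ)^α)^k)⁻¹ := by
    have e1 : 1-((k:ℝ)+1)*α = (1-α) + (-(α*(k:ℕ))) := by push_cast; ring
    rw [e1, Real.rpow_add hn0]
    congr 1
    rw [Real.rpow_neg (le_of_lt hn0), Real.rpow_mul (le_of_lt hn0), Real.rpow_natCast]
  rw [b, h1, div_pow]
  field_simp

lemma summable_xb {α x : ℝ} (hα0 : 0 < α) (hx : 0 ≤ x) {m : ℕ} (hm : 1 ≤ m)
    (hxm : x < (m:ℝ)^α) : Summable (fun k : ℕ => x^k * b m (((k:ℝ)+1)*α)) := by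
  have hm0 : (0:ℝ) < (m:ℝ) := by exact_mod_cast hm
  have hma : (0:ℝ) < (m:ℝ)^α := rpow_pos_of_pos hm0 _
  have hc0 : 0 ≤ x/(m:ℝ)^α := div_nonneg hx (le_of_lt hma)
  have hc1 : x/(m:ℝ)^α < 1 := (div_lt_one hma).mpr hxm
  have := (summable_core hc0 hc1 hα0 m).mul_left ((m:ℝ)^(1-α))
  refine this.congr fun k => ?_
  rw [scale_id x hm k]

/-- The key Mittag-Leffler bound. -/
lemma ML_bound {α x : ℝ} (hα0 : 0 < α) (hα1 : α ≤ 1) (hx : 0 < x) :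
    0 ≤ mittagLeffler α α (-x) ∧ mittagLeffler α α (-x) ≤ 1 := by
  -- choose m
  obtain ⟨m, hm1, hxm⟩ : ∃ m : ℕ, 1 ≤ m ∧ x < (m:ℝ)^α := by
    have ht : Tendsto (fun n : ℕ => ((n:ℝ))^α) atTop atTop :=
      (tendsto_rpow_atTop hα0).comp tendsto_natCast_atTop_atTop
    obtain ⟨m, hm⟩ := ((ht.eventually_gt_atTop x).and (eventually_ge_atTop 1)).exists
    exact ⟨m, hm.2, hm.1⟩
  have hm0 : (0:ℝ) < (m:ℝ) := by exact_mod_cast hm1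
  -- the dominating sequence
  set M : ℕ → ℝ := fun k => x^k * (if ((k:ℝ)+1)*α ≤ 1 then 1 else b m (((k:ℝ)+1)*α)) with hM
  have hMsummable : Summable M := by
    set K : ℕ := ⌈1/α⌉₊ with hK
    have hKα : 1 ≤ (K:ℝ)*α := by
      have h1 : 1/α ≤ (K:ℝ) := Nat.le_ceil _
      calc (1:ℝ) = (1/α)*α := by field_simp
        _ ≤ (K:ℝ)*α := by apply mul_le_mul_of_nonneg_right h1 (le_of_lt hα0)
    rw [← summable_nat_add_iff K]
    have hshift : ∀ j : ℕ, M (j+K) = x^(j+K) * b m (((((j+K):ℕ):ℝ)+1)*α) := by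
      intro j
      rw [hM]
      have hcond : ¬ ((((j+K):ℕ):ℝ)+1)*α ≤ 1 := by
        push_neg
        push_cast
        have hj : (0:ℝ) ≤ (j:ℝ) := by positivity
        nlinarith
      simp only [hcond, if_false]
    rw [funext hshift]
    exact (summable_nat_add_iff K).mpr (summable_xb hα0 (le_of_lt hx) hm1 hxm)
  -- Tannery
  have htannery : Tendsto (fun n : ℕ => ∑' k : ℕ, (-x)^k * b n (((k:ℝ)+1)*α)) atTop
      (𝓝 (∑' k : ℕ, (-x)^k * (1 / Real.Gamma (((k:ℝ)+1)*α)))) := by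
    refine tendsto_tsum_of_dominated_convergence hMsummable (fun k => ?_) ?_
    · exact (b_tendsto (by positivity)).const_mul _
    · filter_upwards [eventually_ge_atTop m] with n hn
      intro k
      have hsk0 : (0:ℝ) < ((k:ℝ)+1)*α := by positivity
      have hb0 : 0 ≤ b n (((k:ℝ)+1)*α) := b_nonneg (le_of_lt hsk0) n
      have hnorm : ‖(-x)^k * b n (((k:ℝ)+1)*α)‖ = x^k * b n (((k:ℝ)+1)*α) := by
        rw [Real.norm_eq_abs, abs_mul, abs_pow, abs_neg, abs_of_nonneg (le_of_lt hx),
          abs_of_nonneg hb0]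
      rw [hnorm, hM]
      apply mul_le_mul_of_nonneg_left _ (pow_nonneg (le_of_lt hx) k)
      by_cases hcase : ((k:ℝ)+1)*α ≤ 1
      · simp only [hcase, if_true]
        exact b_le_one hsk0 hcase (le_trans hm1 hn)
      · simp only [hcase, if_false]
        push_neg at hcase
        exact b_antitone (le_of_lt hcase) hm1 hn
  -- identify the limit with mittagLeffler
  have hlimit : (∑' k : ℕ, (-x)^k * (1 / Real.Gamma (((k:ℝ)+1)*α))) = mittagLeffler α α (-x) := by
    rw [mittagLeffler]
    refine tsum_congr fun k => ?_
    rw [mul_one_div]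
    congr 2
    ring
  rw [hlimit] at htannery
  -- eventual bounds
  have hbounds : ∀ᶠ n : ℕ in atTop, 0 ≤ (∑' k : ℕ, (-x)^k * b n (((k:ℝ)+1)*α))
      ∧ (∑' k : ℕ, (-x)^k * b n (((k:ℝ)+1)*α)) ≤ 1 := by
    filter_upwards [eventually_ge_atTop m] with n hn
    have hn1 : 1 ≤ n := le_trans hm1 hn
    have hn0 : (0:ℝ) < (n:ℝ) := by exact_mod_cast hn1
    have hna : (0:ℝ) < (n:ℝ)^α := rpow_pos_of_pos hn0 _
    have hxn : x < (n:ℝ)^α := lt_of_lt_of_le hxm (by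
      apply Real.rpow_le_rpow (le_of_lt hm0) _ (le_of_lt hα0)
      exact_mod_cast hn)
    set c : ℝ := x/(n:ℝ)^α with hc
    have hc0 : 0 ≤ c := div_nonneg (le_of_lt hx) (le_of_lt hna)
    have hc1 : c < 1 := (div_lt_one hna).mpr hxn
    have hTn : (∑' k : ℕ, (-x)^k * b n (((k:ℝ)+1)*α)) = (n:ℝ)^(1-α) * F α c n := by
      rw [F, ← tsum_mul_left]
      refine tsum_congr fun k => ?_
      rw [scale_id (-x) hn1 k, hc]
      rw [neg_div]
    have hpow0 : (0:ℝ) ≤ (n:ℝ)^(1-α) := le_of_lt (rpow_pos_of_pos hn0 _)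
    constructor
    · rw [hTn]
      exact mul_nonneg hpow0 (F_nonneg hc0 hc1 hα0 hα1 n)
    · rw [hTn]
      calc (n:ℝ)^(1-α) * F α c n ≤ (n:ℝ)^(1-α) * p α n :=
            mul_le_mul_of_nonneg_left (F_le hc0 hc1 hα0 hα1 n) hpow0
        _ = b n α := rfl
        _ ≤ 1 := b_le_one hα0 hα1 hn1
  constructor
  · exact ge_of_tendsto htannery (hbounds.mono fun n h => h.1)
  · exact le_of_tendsto htannery (hbounds.mono fun n h => h.2)





lemma one_div_Gamma_le_b {s : ℝ} (hs : 1 ≤ s) {m : ℕ} (hm : 1 ≤ m) :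
    1/Real.Gamma s ≤ b m s :=
  le_of_tendsto (b_tendsto (by linarith)) <|
    (eventually_ge_atTop m).mono fun n hn => b_antitone hs hm hn

lemma summable_gamma_series {α R : ℝ} (hα0 : 0 < α) (hR : 0 ≤ R) :
    Summable (fun k : ℕ => R^k * (1/Real.Gamma (((k:ℝ)+1)*α))) := by
  obtain ⟨m, hm1, hxm⟩ : ∃ m : ℕ, 1 ≤ m ∧ R < (m:ℝ)^α := by
    have ht : Tendsto (fun n : ℕ => ((n:ℝ))^α) atTop atTop :=
      (tendsto_rpow_atTop hα0).comp tendsto_natCast_atTop_atTop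
    obtain ⟨m, hm⟩ := ((ht.eventually_gt_atTop R).and (eventually_ge_atTop 1)).exists
    exact ⟨m, hm.2, hm.1⟩
  set K : ℕ := ⌈1/α⌉₊ with hK
  have hKα : 1 ≤ (K:ℝ)*α := by
    have h1 : 1/α ≤ (K:ℝ) := Nat.le_ceil _
    calc (1:ℝ) = (1/α)*α := by field_simp
      _ ≤ (K:ℝ)*α := mul_le_mul_of_nonneg_right h1 (le_of_lt hα0)
  rw [← summable_nat_add_iff K]
  have hsummable : Summable (fun j : ℕ => R^(j+K) * b m (((((j+K):ℕ):ℝ)+1)*α)) :=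
    (summable_nat_add_iff K).mpr (summable_xb hα0 hR hm1 hxm)
  refine Summable.of_nonneg_of_le (fun j => ?_) (fun j => ?_) hsummable
  · have h0 : 0 < Real.Gamma (((((j+K):ℕ):ℝ)+1)*α) := Real.Gamma_pos_of_pos (by positivity)
    positivity
  · apply mul_le_mul_of_nonneg_left _ (pow_nonneg hR _)
    apply one_div_Gamma_le_b _ hm1
    push_cast
    have hj : (0:ℝ) ≤ (j:ℝ) := by positivity
    nlinarith

lemma ML_continuousOn {α : ℝ} (hα0 : 0 < α) {R : ℝ} (hR : 0 < R) :
    ContinuousOn (fun y : ℝ => mittagLeffler α α y) (Set.Icc (-R) R) := by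
  set u : ℝ → ℝ := fun y => max (-R) (min y R) with hu
  have hu_cont : Continuous u := continuous_const.max (continuous_id.min continuous_const)
  have hu_abs : ∀ y, |u y| ≤ R := fun y =>
    abs_le.mpr ⟨le_max_left _ _, max_le (by linarith) (min_le_right _ _)⟩
  have hΓpos : ∀ k : ℕ, 0 < Real.Gamma ((k:ℝ)*α + α) :=
    fun k => Real.Gamma_pos_of_pos (by positivity)
  set W : ℕ → ℝ := fun k => R^k / Real.Gamma ((k:ℝ)*α + α) with hW
  have hWsum : Summable W := by
    refine (summable_gamma_series hα0 (le_of_lt hR)).congr fun k => ?_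
    rw [hW, mul_one_div]
    congr 2
    ring
  have hG : Continuous (fun y : ℝ => ∑' k : ℕ, (u y)^k / Real.Gamma ((k:ℝ)*α + α)) := by
    refine continuous_tsum (fun k => ((hu_cont.pow k).div_const _)) hWsum (fun k y => ?_)
    rw [hW, norm_div, Real.norm_eq_abs (Real.Gamma _), abs_of_pos (hΓpos k)]
    rw [div_le_div_iff_of_pos_right (hΓpos k), norm_pow]
    refine pow_le_pow_left₀ (norm_nonneg _) ?_ k
    rw [Real.norm_eq_abs]
    exact hu_abs y
  refine hG.continuousOn.congr fun y hy => ?_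
  obtain ⟨hy1, hy2⟩ := Set.mem_Icc.mp hy
  have huy : u y = y := by
    rw [hu]
    simp only [min_eq_left hy2, max_eq_right hy1]
  simp only [mittagLeffler, huy]


end MLAux

open MLAux

theorem I1_bound (α H : ℝ) (hH0 : 0 < H) (hH1 : H < 1/2) (hα0 : 0 < α) (hα1 : α ≤ 1)
    (hαH : 1 < α + H) :
    ∃ C : ℝ, 0 < C ∧ ∀ lam t : ℝ, 0 < lam → 0 < t →
      (∫ τ in (0:ℝ)..t, (t / τ) ^ (2*H - 1) * (t - τ) ^ (2*α + 2*H - 3)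
          * (mittagLeffler α α (-lam * (t - τ) ^ α)) ^ 2)
        ≤ C * t ^ (2*α + 2*H - 2) := by
  have hr1 : (0:ℝ) < 2*α + 2*H - 2 := by linarith
  refine ⟨1/(2*α+2*H-2), by positivity, fun lam t hlam ht => ?_⟩
  have hrneg : 2*α + 2*H - 3 < 0 := by linarith
  have hrgt : (-1:ℝ) < 2*α + 2*H - 3 := by linarith
  set r : ℝ := 2*α + 2*H - 3 with hr
  -- integrability of the dominating function
  have hg_int : IntervalIntegrable (fun τ : ℝ => (t - τ) ^ r) volume 0 t := by
    have h1 : IntervalIntegrable (fun x : ℝ => x ^ r) volume 0 t :=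
      intervalIntegrable_rpow' hrgt
    have h2 := h1.comp_sub_left t
    simpa using h2.symm
  -- pointwise bound on [0,t]
  have hpoint : ∀ τ ∈ Set.Icc (0:ℝ) t,
      (t / τ) ^ (2*H - 1) * (t - τ) ^ r * (mittagLeffler α α (-lam * (t - τ) ^ α)) ^ 2
        ≤ (t - τ) ^ r := by
    intro τ hτ
    obtain ⟨hτ0, hτt⟩ := hτ
    rcases eq_or_lt_of_le hτ0 with heq | hτpos
    · -- τ = 0
      rw [← heq, div_zero, Real.zero_rpow (by linarith : 2*H-1 ≠ 0)]
      rw [zero_mul, zero_mul, sub_zero]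
      positivity
    · have hA0 : (0:ℝ) ≤ (t / τ) ^ (2*H - 1) := rpow_nonneg (by positivity) _
      have hA1 : (t / τ) ^ (2*H - 1) ≤ 1 := by
        apply Real.rpow_le_one_of_one_le_of_nonpos
        · rw [le_div_iff₀ hτpos]; linarith
        · linarith
      have hB0 : (0:ℝ) ≤ (t - τ) ^ r := rpow_nonneg (by linarith) _
      rcases eq_or_lt_of_le hτt with heqt | hτlt
      · -- τ = t
        rw [heqt, sub_self, Real.zero_rpow (by linarith : r ≠ 0)]
        simp
      · -- 0 < τ < t
        have hx : 0 < lam * (t - τ) ^ α :=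
          mul_pos hlam (rpow_pos_of_pos (by linarith) _)
        have hml := ML_bound hα0 hα1 hx
        have harg : -lam * (t - τ) ^ α = -(lam * (t - τ) ^ α) := by ring
        rw [harg]
        have hE0 : 0 ≤ mittagLeffler α α (-(lam * (t - τ) ^ α)) := hml.1
        have hE1 : mittagLeffler α α (-(lam * (t - τ) ^ α)) ≤ 1 := hml.2
        have hE2 : (mittagLeffler α α (-(lam * (t - τ) ^ α))) ^ 2 ≤ 1 :=
          pow_le_one₀ hE0 hE1
        have hE2' : (0:ℝ) ≤ (mittagLeffler α α (-(lam * (t - τ) ^ α))) ^ 2 := sq_nonneg _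
        calc (t / τ) ^ (2*H - 1) * (t - τ) ^ r * (mittagLeffler α α (-(lam * (t - τ) ^ α))) ^ 2
            ≤ 1 * (t - τ) ^ r * 1 := by
              apply mul_le_mul _ hE2 hE2' (by positivity)
              exact mul_le_mul_of_nonneg_right hA1 hB0
          _ = (t - τ) ^ r := by ring
  -- measurability of the integrand
  have hφ_aesm : MeasureTheory.AEStronglyMeasurable
      (fun τ : ℝ => (t / τ) ^ (2*H - 1) * (t - τ) ^ r
        * (mittagLeffler α α (-lam * (t - τ) ^ α)) ^ 2)
      (MeasureTheory.volume.restrict (Set.uIoc 0 t)) := by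
    have hAB : Measurable (fun τ : ℝ => (t / τ) ^ (2*H - 1) * (t - τ) ^ r) := by fun_prop
    set R : ℝ := lam * t ^ α + 1 with hR
    have hRpos : 0 < R := by positivity
    have hinner : Continuous (fun τ : ℝ => -lam * (t - τ) ^ α) := by
      have h1 : Continuous (fun τ : ℝ => (t - τ) ^ α) := by
        apply Continuous.rpow_const (by fun_prop)
        intro τ
        right; linarith
      fun_prop
    have hmaps : Set.MapsTo (fun τ : ℝ => -lam * (t - τ) ^ α) (Set.uIoc 0 t)
        (Set.Icc (-R) R) := by
      intro τ hτ
      rw [Set.uIoc_of_le (le_of_lt ht)] at hτ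
      obtain ⟨hτ0, hτt⟩ := hτ
      have h1 : (0:ℝ) ≤ (t - τ) ^ α := rpow_nonneg (by linarith) _
      have h2 : (t - τ) ^ α ≤ t ^ α :=
        Real.rpow_le_rpow (by linarith) (by linarith) (le_of_lt hα0)
      have h3 : -R ≤ -lam * (t - τ) ^ α ∧ -lam * (t - τ) ^ α ≤ R := by
        constructor
        · rw [hR]; nlinarith [mul_le_mul_of_nonneg_left h2 (le_of_lt hlam)]
        · rw [hR]; nlinarith [mul_nonneg (le_of_lt hlam) h1]
      exact Set.mem_Icc.mpr h3
    have hEcont : ContinuousOn (fun τ : ℝ => mittagLeffler α α (-lam * (t - τ) ^ α))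
        (Set.uIoc 0 t) :=
      (ML_continuousOn hα0 hRpos).comp hinner.continuousOn hmaps
    have hE_aesm : AEStronglyMeasurable
        (fun τ : ℝ => mittagLeffler α α (-lam * (t - τ) ^ α))
        (volume.restrict (Set.uIoc 0 t)) :=
      hEcont.aestronglyMeasurable (by
        rw [Set.uIoc_of_le (le_of_lt ht)]; exact measurableSet_Ioc)
    exact (hAB.aestronglyMeasurable.mul (hE_aesm.mul hE_aesm)).congr (by
      filter_upwards with τ
      simp only [Pi.mul_apply]
      ring)
  -- integrability of the integrand
  have hφ_int : IntervalIntegrable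
      (fun τ : ℝ => (t / τ) ^ (2*H - 1) * (t - τ) ^ r
        * (mittagLeffler α α (-lam * (t - τ) ^ α)) ^ 2) volume 0 t := by
    refine hg_int.mono_fun hφ_aesm ?_
    rw [Filter.EventuallyLE, MeasureTheory.ae_restrict_iff' (by
      rw [Set.uIoc_of_le (le_of_lt ht)]; exact measurableSet_Ioc)]
    apply MeasureTheory.ae_of_all
    intro τ hτ
    rw [Set.uIoc_of_le (le_of_lt ht)] at hτ
    obtain ⟨hτ0, hτt⟩ := hτ
    have hmem : τ ∈ Set.Icc (0:ℝ) t := ⟨le_of_lt hτ0, hτt⟩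
    have h1 := hpoint τ hmem
    have hφ0 : (0:ℝ) ≤ (t / τ) ^ (2*H - 1) * (t - τ) ^ r
        * (mittagLeffler α α (-lam * (t - τ) ^ α)) ^ 2 := by
      have := rpow_nonneg (show (0:ℝ) ≤ t/τ by positivity) (2*H-1)
      have := rpow_nonneg (show (0:ℝ) ≤ t-τ by linarith) r
      positivity
    have hg0 : (0:ℝ) ≤ (t - τ) ^ r := rpow_nonneg (by linarith) _
    rw [Real.norm_eq_abs, Real.norm_eq_abs, abs_of_nonneg hφ0, abs_of_nonneg hg0]
    exact h1
  -- compare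
  have hcompare := intervalIntegral.integral_mono_on (le_of_lt ht) hφ_int hg_int hpoint
  -- compute the dominating integral
  have hval : (∫ τ in (0:ℝ)..t, (t - τ) ^ r) = t ^ (r+1) / (r+1) := by
    have h1 := intervalIntegral.integral_comp_sub_left (a := 0) (b := t)
      (fun x : ℝ => x ^ r) t
    simp only [sub_self, sub_zero] at h1
    rw [h1, integral_rpow (Or.inl hrgt)]
    rw [Real.zero_rpow (by linarith : r + 1 ≠ 0)]
    ring
  calc (∫ τ in (0:ℝ)..t, (t / τ) ^ (2*H - 1) * (t - τ) ^ (2*α + 2*H - 3)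
          * (mittagLeffler α α (-lam * (t - τ) ^ α)) ^ 2)
      ≤ ∫ τ in (0:ℝ)..t, (t - τ) ^ r := hcompare
    _ = t ^ (r+1) / (r+1) := hval
    _ = 1/(2*α+2*H-2) * t ^ (2*α + 2*H - 2) := by
        rw [hr]
        have : 2*α + 2*H - 3 + 1 = 2*α + 2*H - 2 := by ring
        rw [this]
        ring
end
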